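/- arXiv:2004.14241 — 9 statements merged into one kernel-verified Lean document; each statement's English description precedes it below -/
import Mathlib

section
/- Let q be a prime power, n ≥ 1, and let U, W be subspaces of 𝔽_q^n. Then the subspace distance satisfies d_S(U,W) ≥ d_H(v(U), v(W)), i.e., dim(U) + dim(W) − 2·dim(U ∩ W) is at least the Hamming distance between the identifying vectors of U and W. -/
/-- Projection of `F^n` onto the first `i` coordinates (realized as the linear
endomorphism of `F^n` that zeroes out all coordinates with index `≥ i`). -/
def zeroProj (F : Type*) [Field F] (n i : ℕ) : (Fin n → F) →ₗ[F] (Fin n → F) where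
  toFun x := fun j => if (j : ℕ) < i then x j else 0
  map_add' x y := by
    funext j; by_cases h : (j : ℕ) < i <;> simp [h]
  map_smul' c x := by
    funext j; by_cases h : (j : ℕ) < i <;> simp [h]

/-- `projDim F U i = dim π_i(U)`, the dimension of the projection of `U` onto the
first `i` coordinates. -/
noncomputable def projDim (F : Type*) [Field F] {n : ℕ} (U : Submodule F (Fin n → F))
    (i : ℕ) : ℕ :=
  Module.finrank F ↥(U.map (zeroProj F n i))

/-- Subspace distance `d_S(U,W) = dim U + dim W - 2 dim (U ∩ W)`. -/
noncomputable def subspaceDist (F : Type*) [Field F] {n : ℕ}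
    (U W : Submodule F (Fin n → F)) : ℕ :=
  Module.finrank F ↥U + Module.finrank F ↥W - 2 * Module.finrank F ↥(U ⊓ W)

/-- Identifying vector `v(U) ∈ 𝔽₂ⁿ`: `v(U)_i = 1` iff `dim π_i(U) > dim π_{i-1}(U)`. -/
noncomputable def idVec (F : Type*) [Field F] {n : ℕ} (U : Submodule F (Fin n → F)) :
    Fin n → Bool :=
  fun i => decide (projDim F U (i : ℕ) < projDim F U ((i : ℕ) + 1))

open Module

section Aux

variable (F : Type*) [Field F] {n : ℕ}

lemma zeroProj_apply (i : ℕ) (x : Fin n → F) (j : Fin n) :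
    zeroProj F n i x j = if (j : ℕ) < i then x j else 0 := rfl

lemma zeroProj_comp {i k : ℕ} (h : i ≤ k) :
    (zeroProj F n i).comp (zeroProj F n k) = zeroProj F n i := by
  ext x j
  simp only [LinearMap.comp_apply, zeroProj_apply]
  by_cases hj : (j : ℕ) < i
  · simp [hj, lt_of_lt_of_le hj h]
  · simp [hj]

lemma zeroProj_zero : zeroProj F n 0 = 0 := by
  ext x j; simp [zeroProj_apply]

lemma zeroProj_n : zeroProj F n n = LinearMap.id := by
  ext x j; simp [zeroProj_apply, j.isLt]

lemma projDim_zero (S : Submodule F (Fin n → F)) : projDim F S 0 = 0 := by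
  simp [projDim, zeroProj_zero, Submodule.map_zero]

lemma projDim_n (S : Submodule F (Fin n → F)) : projDim F S n = finrank F S := by
  rw [projDim, zeroProj_n, Submodule.map_id]

lemma projDim_mono (S : Submodule F (Fin n → F)) : Monotone (projDim F S) := by
  intro i k h
  have e : S.map (zeroProj F n i) = (S.map (zeroProj F n k)).map (zeroProj F n i) := by
    rw [← Submodule.map_comp, zeroProj_comp F h]
  rw [projDim, projDim, e]
  exact Submodule.finrank_map_le _ _

/-- The restriction of `π_i` to `π_{i+1}(S)`. -/
noncomputable def stepMap (S : Submodule F (Fin n → F)) (i : ℕ) :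
    ↥(S.map (zeroProj F n (i+1))) →ₗ[F] (Fin n → F) :=
  (zeroProj F n i).comp (S.map (zeroProj F n (i+1))).subtype

lemma stepMap_range (S : Submodule F (Fin n → F)) (i : ℕ) :
    LinearMap.range (stepMap F S i) = S.map (zeroProj F n i) := by
  rw [stepMap, LinearMap.range_comp, Submodule.range_subtype, ← Submodule.map_comp,
    zeroProj_comp F (Nat.le_succ i)]

lemma projDim_succ (S : Submodule F (Fin n → F)) (i : ℕ) :
    projDim F S (i+1) = projDim F S i + finrank F (LinearMap.ker (stepMap F S i)) := by
  have := LinearMap.finrank_range_add_finrank_ker (stepMap F S i)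
  rw [stepMap_range] at this
  rw [projDim, projDim, ← this]

set_option synthInstance.maxHeartbeats 1000000 in
lemma ker_stepMap_le_one (S : Submodule F (Fin n → F)) {i : ℕ} (hi : i < n) :
    finrank F (LinearMap.ker (stepMap F S i)) ≤ 1 := by
  -- evaluation at coordinate i is injective on the kernel
  have hinj : Function.Injective fun y : LinearMap.ker (stepMap F S i) =>
      ((y : ↥(S.map (zeroProj F n (i+1)))) : Fin n → F) ⟨i, hi⟩ := by
    intro y z hyz
    ext j
    by_cases hj : (j : ℕ) < i + 1
    · by_cases hj' : (j : ℕ) < i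
      · have hy := congrFun (y.2 : stepMap F S i y.1 = 0) j
        have hz := congrFun (z.2 : stepMap F S i z.1 = 0) j
        simp only [stepMap, LinearMap.comp_apply, Submodule.subtype_apply,
          zeroProj_apply, hj', if_pos] at hy hz
        simp [hy, hz]
      · have : j = ⟨i, hi⟩ := by
          apply Fin.ext; show (j : ℕ) = i; omega
        rw [this]; exact hyz
    · -- coords ≥ i+1 are zero since the element lies in the image of zeroProj (i+1)
      obtain ⟨xy, -, hxy⟩ := y.1.2
      obtain ⟨xz, -, hxz⟩ := z.1.2
      have h1 : (y.1 : Fin n → F) j = 0 := by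
        rw [← hxy]; simp [zeroProj_apply, hj]
      have h2 : (z.1 : Fin n → F) j = 0 := by
        rw [← hxz]; simp [zeroProj_apply, hj]
      simp [h1, h2]
  have key := LinearMap.finrank_le_finrank_of_injective
    (f := (LinearMap.proj (⟨i, hi⟩ : Fin n)).comp
      ((S.map (zeroProj F n (i+1))).subtype.comp
        (LinearMap.ker (stepMap F S i)).subtype)) hinj
  simpa using key

set_option synthInstance.maxHeartbeats 1000000 in
lemma jump_iff (S : Submodule F (Fin n → F)) {i : ℕ} (hi : i < n) :
    projDim F S i < projDim F S (i+1) ↔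
      ∃ x ∈ S, (∀ j : Fin n, (j : ℕ) < i → x j = 0) ∧ x ⟨i, hi⟩ ≠ 0 := by
  rw [projDim_succ, Nat.lt_add_right_iff_pos]
  rw [Module.finrank_pos_iff_exists_ne_zero (R := F) (M := ↥(LinearMap.ker (stepMap F S i)))]
  constructor
  · rintro ⟨⟨⟨y, hy⟩, hker⟩, hne⟩
    obtain ⟨x, hxS, hx⟩ := hy
    have hker' : zeroProj F n i y = 0 := hker
    refine ⟨x, hxS, fun j hj => ?_, fun h0 => ?_⟩
    · have := congrFun hker' j
      simp only [zeroProj_apply, hj, if_pos, Pi.zero_apply] at this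
      rw [← hx] at this
      simpa [zeroProj_apply, Nat.lt_succ_of_lt hj] using this
    · apply hne
      have : y = 0 := by
        funext j
        rw [← hx]
        by_cases hj : (j : ℕ) < i + 1
        · by_cases hj' : (j : ℕ) < i
          · have := congrFun hker' j
            simp only [zeroProj_apply, hj', if_pos, Pi.zero_apply] at this
            rw [← hx] at this
            simpa [zeroProj_apply, hj] using this
          · have hji : j = ⟨i, hi⟩ := by apply Fin.ext; show (j : ℕ) = i; omega
            simp [zeroProj_apply, hj, hji, h0]
        · simp [zeroProj_apply, hj]
      exact Subtype.ext (Subtype.ext this)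
  · rintro ⟨x, hxS, hlt, hne⟩
    have hymem : zeroProj F n (i+1) x ∈ S.map (zeroProj F n (i+1)) :=
      Submodule.mem_map_of_mem hxS
    have hker : (⟨zeroProj F n (i+1) x, hymem⟩ : ↥(S.map (zeroProj F n (i+1)))) ∈
        LinearMap.ker (stepMap F S i) := by
      show zeroProj F n i (zeroProj F n (i+1) x) = 0
      funext j
      by_cases hj : (j : ℕ) < i
      · simp [zeroProj_apply, hj, Nat.lt_succ_of_lt hj, hlt j hj]
      · simp [zeroProj_apply, hj]
    refine ⟨⟨⟨zeroProj F n (i+1) x, hymem⟩, hker⟩, fun h0 => hne ?_⟩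
    have : zeroProj F n (i+1) x = 0 := by
      have := congrArg (Subtype.val ∘ Subtype.val) h0
      simpa using this
    have := congrFun this ⟨i, hi⟩
    simpa [zeroProj_apply, hi] using this

lemma card_jumps (S : Submodule F (Fin n → F)) :
    (Finset.univ.filter
      (fun i : Fin n => projDim F S (i : ℕ) < projDim F S ((i : ℕ)+1))).card
      = finrank F S := by
  classical
  have hsum : ∑ i ∈ Finset.range n, (projDim F S (i+1) - projDim F S i)
      = finrank F S := by
    rw [Finset.sum_range_tsub (projDim_mono F S) n, projDim_n, projDim_zero, Nat.sub_zero]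
  rw [Finset.card_filter,
    Fin.sum_univ_eq_sum_range
      (fun i => if projDim F S i < projDim F S (i+1) then (1:ℕ) else 0), ← hsum]
  refine Finset.sum_congr rfl fun i hi => ?_
  have hi' : i < n := Finset.mem_range.mp hi
  have h1 : projDim F S (i+1) ≤ projDim F S i + 1 := by
    rw [projDim_succ]
    exact Nat.add_le_add_left (ker_stepMap_le_one F S hi') _
  by_cases h : projDim F S i < projDim F S (i+1) <;> simp [h] <;> omega

end Aux

theorem statement0 (q n : ℕ) (hq : IsPrimePow q) (hn : 1 ≤ n)
    (F : Type*) [Field F] [Fintype F] (hF : Fintype.card F = q)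
    (U W : Submodule F (Fin n → F)) :
    hammingDist (idVec F U) (idVec F W) ≤ subspaceDist F U W := by
  classical
  have hU := card_jumps F U
  have hW := card_jumps F W
  have hI := card_jumps F (U ⊓ W)
  have hsub : ∀ i : Fin n,
      (projDim F (U ⊓ W) (i : ℕ) < projDim F (U ⊓ W) ((i : ℕ)+1)) →
      (projDim F U (i : ℕ) < projDim F U ((i : ℕ)+1)) ∧
      (projDim F W (i : ℕ) < projDim F W ((i : ℕ)+1)) := by
    intro i h
    rw [jump_iff F _ i.isLt] at h
    obtain ⟨x, hx, h1, h2⟩ := h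
    exact ⟨(jump_iff F U i.isLt).mpr ⟨x, hx.1, h1, h2⟩,
      (jump_iff F W i.isLt).mpr ⟨x, hx.2, h1, h2⟩⟩
  have hham : hammingDist (idVec F U) (idVec F W)
      = (Finset.univ.filter (fun i : Fin n =>
          ¬ ((projDim F U (i : ℕ) < projDim F U ((i : ℕ)+1)) ↔
             (projDim F W (i : ℕ) < projDim F W ((i : ℕ)+1))))).card := by
    unfold hammingDist
    congr 1
    ext i
    simp only [Finset.mem_filter, Finset.mem_univ, true_and, idVec, ne_eq,
      decide_eq_decide]
  have hCsub : (Finset.univ.filter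
        (fun i : Fin n => projDim F (U ⊓ W) (i : ℕ) < projDim F (U ⊓ W) ((i : ℕ)+1))).card
      ≤ (Finset.univ.filter (fun i : Fin n =>
          (projDim F U (i : ℕ) < projDim F U ((i : ℕ)+1)) ∧
          (projDim F W (i : ℕ) < projDim F W ((i : ℕ)+1)))).card := by
    apply Finset.card_le_card
    intro i hi
    simp only [Finset.mem_filter, Finset.mem_univ, true_and] at *
    exact hsub i hi
  have hkey : (Finset.univ.filter (fun i : Fin n =>
          ¬ ((projDim F U (i : ℕ) < projDim F U ((i : ℕ)+1)) ↔
             (projDim F W (i : ℕ) < projDim F W ((i : ℕ)+1))))).card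
      + 2 * (Finset.univ.filter (fun i : Fin n =>
          (projDim F U (i : ℕ) < projDim F U ((i : ℕ)+1)) ∧
          (projDim F W (i : ℕ) < projDim F W ((i : ℕ)+1)))).card
      = (Finset.univ.filter
          (fun i : Fin n => projDim F U (i : ℕ) < projDim F U ((i : ℕ)+1))).card
      + (Finset.univ.filter
          (fun i : Fin n => projDim F W (i : ℕ) < projDim F W ((i : ℕ)+1))).card := by
    simp only [Finset.card_filter]
    rw [Finset.mul_sum, ← Finset.sum_add_distrib, ← Finset.sum_add_distrib]
    refine Finset.sum_congr rfl fun i _ => ?_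
    by_cases h1 : projDim F U (i : ℕ) < projDim F U ((i : ℕ)+1) <;>
      by_cases h2 : projDim F W (i : ℕ) < projDim F W ((i : ℕ)+1) <;>
      simp [h1, h2]
  rw [subspaceDist, ← hU, ← hW, ← hI, hham]
  omega
end

section
/- Let q be a prime power and k ≤ n. For matrices A, B ∈ 𝔽_q^{k×(n−k)}, let U be the row space of the block matrix (I_k | A) and W the row space of (I_k | B), both regarded as subspaces of 𝔽_q^n. Then dim(U) = dim(W) = k and d_S(U,W) = 2·rank(A − B). (This is the case of the paper's Lemma 2 — d_S(U,W) = 2·d_R(E(U),E(W)) when U and W have the same identifying vector — for the identifying vector (1,…,1,0,…,0) with k ones.) -/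
/-- The `k × n` matrix `(I_k | A)`: the horizontal concatenation of the `k × k`
identity matrix with `A ∈ F^{k×(n-k)}`. -/
def concatIA (F : Type*) [Field F] {k n : ℕ} (hk : k ≤ n)
    (A : Matrix (Fin k) (Fin (n - k)) F) : Matrix (Fin k) (Fin n) F :=
  Matrix.of fun i j =>
    if hj : (j : ℕ) < k then (if (i : ℕ) = (j : ℕ) then 1 else 0)
    else A i ⟨(j : ℕ) - k, by have := j.isLt; omega⟩

/-- The row space of a matrix, as a subspace of `F^n`. -/
def rowSpace (F : Type*) [Field F] {k n : ℕ} (M : Matrix (Fin k) (Fin n) F) :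
    Submodule F (Fin n → F) :=
  Submodule.span F (Set.range fun i : Fin k => M i)

section Aux
open Matrix

variable {F : Type*} [Field F] {k n : ℕ}

lemma vecMul_concatIA_lt (hk : k ≤ n) (A : Matrix (Fin k) (Fin (n - k)) F)
    (x : Fin k → F) (j : Fin n) (hj : (j : ℕ) < k) :
    (x ᵥ* concatIA F hk A) j = x ⟨j, hj⟩ := by
  classical
  simp only [Matrix.vecMul, dotProduct, concatIA, Matrix.of_apply, hj, dif_pos]
  rw [Finset.sum_eq_single (⟨(j : ℕ), hj⟩ : Fin k)]
  · simp
  · intro b _ hb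
    rw [if_neg, mul_zero]
    intro h
    exact hb (Fin.ext h)
  · simp

lemma vecMul_concatIA_ge (hk : k ≤ n) (A : Matrix (Fin k) (Fin (n - k)) F)
    (x : Fin k → F) (j : Fin n) (hj : ¬ (j : ℕ) < k) :
    (x ᵥ* concatIA F hk A) j = (x ᵥ* A) ⟨(j : ℕ) - k, by have := j.isLt; omega⟩ := by
  simp only [Matrix.vecMul, dotProduct, concatIA, Matrix.of_apply, hj, dif_neg,
    not_false_iff]

lemma rowSpace_eq_range (M : Matrix (Fin k) (Fin n) F) :
    rowSpace F M = LinearMap.range M.vecMulLinear := by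
  rw [range_vecMulLinear, rowSpace]
  rfl

lemma concatIA_injective (hk : k ≤ n) (A : Matrix (Fin k) (Fin (n - k)) F) :
    Function.Injective (concatIA F hk A).vecMulLinear := by
  rw [← LinearMap.ker_eq_bot]
  rw [Submodule.eq_bot_iff]
  intro x hx
  funext i
  have h := congr_fun (LinearMap.mem_ker.mp hx) ⟨(i : ℕ), lt_of_lt_of_le i.isLt hk⟩
  rw [Matrix.vecMulLinear_apply, vecMul_concatIA_lt hk A x _ i.isLt] at h
  simpa using h

lemma finrank_rowSpace (hk : k ≤ n) (A : Matrix (Fin k) (Fin (n - k)) F) :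
    Module.finrank F ↥(rowSpace F (concatIA F hk A)) = k := by
  rw [rowSpace_eq_range]
  rw [LinearMap.finrank_range_of_inj (concatIA_injective hk A)]
  exact Module.finrank_fin_fun F

lemma rowSpace_inter (hk : k ≤ n) (A B : Matrix (Fin k) (Fin (n - k)) F) :
    rowSpace F (concatIA F hk A) ⊓ rowSpace F (concatIA F hk B)
      = Submodule.map (concatIA F hk A).vecMulLinear
          (LinearMap.ker (A - B).vecMulLinear) := by
  rw [rowSpace_eq_range, rowSpace_eq_range]
  ext y
  simp only [Submodule.mem_inf, LinearMap.mem_range, Submodule.mem_map, LinearMap.mem_ker]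
  constructor
  · rintro ⟨⟨x, hx⟩, ⟨z, hz⟩⟩
    have hxz : x = z := by
      funext i
      have hi : (i : ℕ) < k := i.isLt
      have h1 := congr_fun hx ⟨(i : ℕ), lt_of_lt_of_le hi hk⟩
      have h2 := congr_fun hz ⟨(i : ℕ), lt_of_lt_of_le hi hk⟩
      rw [Matrix.vecMulLinear_apply, vecMul_concatIA_lt hk A x _ hi] at h1
      rw [Matrix.vecMulLinear_apply, vecMul_concatIA_lt hk B z _ hi] at h2
      simp only [Fin.eta] at h1 h2
      rw [h1, h2]
    refine ⟨x, ?_, hx⟩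
    funext t
    have ht : k + (t : ℕ) < n := by have := t.isLt; omega
    have h1 := congr_fun hx ⟨k + (t : ℕ), ht⟩
    have h2 := congr_fun hz ⟨k + (t : ℕ), ht⟩
    have hlt : ¬ ((⟨k + (t : ℕ), ht⟩ : Fin n) : ℕ) < k := by simp
    rw [Matrix.vecMulLinear_apply, vecMul_concatIA_ge hk A x _ hlt] at h1
    rw [Matrix.vecMulLinear_apply, vecMul_concatIA_ge hk B z _ hlt] at h2
    have hidx : (⟨((⟨k + (t : ℕ), ht⟩ : Fin n) : ℕ) - k, by omega⟩ : Fin (n - k)) = t := by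
      ext; simp
    rw [hidx] at h1 h2
    rw [Matrix.vecMulLinear_apply, Matrix.vecMul_sub, Pi.sub_apply, Pi.zero_apply, sub_eq_zero,
      h1, ← hxz] at *
    rw [h2]
  · rintro ⟨x, hker, hx⟩
    refine ⟨⟨x, hx⟩, ⟨x, ?_⟩⟩
    rw [← hx]
    simp only [Matrix.vecMulLinear_apply] at hker ⊢
    funext j
    by_cases hj : (j : ℕ) < k
    · rw [vecMul_concatIA_lt hk A x j hj, vecMul_concatIA_lt hk B x j hj]
    · rw [vecMul_concatIA_ge hk A x j hj, vecMul_concatIA_ge hk B x j hj]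
      have := congr_fun hker ⟨(j : ℕ) - k, by have := j.isLt; omega⟩
      rw [Matrix.vecMul_sub, Pi.sub_apply, Pi.zero_apply, sub_eq_zero] at this
      exact this.symm

lemma rank_eq_finrank_range_vecMulLinear (M : Matrix (Fin k) (Fin (n - k)) F) :
    M.rank = Module.finrank F ↥(LinearMap.range M.vecMulLinear) := by
  rw [← Matrix.rank_transpose, Matrix.rank, ← Matrix.mulVecLin_transpose]

end Aux

theorem statement1 (q n k : ℕ) (hq : IsPrimePow q) (hk : k ≤ n)
    (F : Type*) [Field F] [Fintype F] (hF : Fintype.card F = q)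
    (A B : Matrix (Fin k) (Fin (n - k)) F)
    (U W : Submodule F (Fin n → F))
    (hU : U = rowSpace F (concatIA F hk A))
    (hW : W = rowSpace F (concatIA F hk B)) :
    Module.finrank F ↥U = k ∧ Module.finrank F ↥W = k ∧
      subspaceDist F U W = 2 * (A - B).rank := by
  subst hU hW
  refine ⟨finrank_rowSpace hk A, finrank_rowSpace hk B, ?_⟩
  have hinter : Module.finrank F
      ↥(rowSpace F (concatIA F hk A) ⊓ rowSpace F (concatIA F hk B))
      = Module.finrank F ↥(LinearMap.ker (A - B).vecMulLinear) := by
    rw [rowSpace_inter hk A B]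
    exact (LinearEquiv.finrank_eq
      (Submodule.equivMapOfInjective _ (concatIA_injective hk A) _)).symm
  have hrn : Module.finrank F ↥(LinearMap.range (A - B).vecMulLinear)
      + Module.finrank F ↥(LinearMap.ker (A - B).vecMulLinear) = k := by
    rw [LinearMap.finrank_range_add_finrank_ker]
    exact Module.finrank_fin_fun F
  have hrank := rank_eq_finrank_range_vecMulLinear (A - B)
  rw [subspaceDist, finrank_rowSpace hk A, finrank_rowSpace hk B, hinter]
  omega
end

section
/- Let q be a prime power, k and n integers with 2 ≤ 2k ≤ n, and d an even integer with 2 ≤ d ≤ 2k. Then there exists an (n, q^{(n−k)(k−d/2+1)}, d, k)_q constant dimension code; that is, there is a set of q^{(n−k)(k−d/2+1)} k-dimensional subspaces of 𝔽_q^n such that any two distinct members U, W satisfy d_S(U,W) ≥ d. -/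
open Polynomial

noncomputable section GabidulinAux

variable (F : Type*) [Field F] [Fintype F]

/-- Splitting field of `X^(q^m) - X` over `F`, a field with `q^m` elements. -/
def BigF (m : ℕ) : Type _ :=
  SplittingField (X ^ (Fintype.card F) ^ m - X : F[X])

instance (m : ℕ) : Field (BigF F m) := inferInstanceAs (Field (SplittingField _))
instance (m : ℕ) : Algebra F (BigF F m) := inferInstanceAs (Algebra F (SplittingField _))
instance (m : ℕ) : FiniteDimensional F (BigF F m) :=
  inferInstanceAs (FiniteDimensional F (SplittingField _))
instance (m : ℕ) : Finite (BigF F m) := Module.finite_of_finite F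

theorem finrank_BigF (m : ℕ) (hm : m ≠ 0) : Module.finrank F (BigF F m) = m := by
  haveI : Fintype (BigF F m) := Fintype.ofFinite _
  obtain ⟨p, hp⟩ := CharP.exists F
  haveI : CharP F p := hp
  haveI : CharP (BigF F m) p := charP_of_injective_algebraMap' F p
  obtain ⟨e, hpp, hqe⟩ := FiniteField.card F p
  haveI : Fact p.Prime := ⟨hpp⟩
  set q := Fintype.card F with hqdef
  set K := BigF F m
  set g : F[X] := X ^ q ^ m - X with hg
  have hq1 : 1 < q := Fintype.one_lt_card
  have hdvd : p ∣ q ^ m := (hqe ▸ dvd_pow_self p e.ne_zero).trans (dvd_pow_self q hm)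
  have aux : g ≠ 0 := FiniteField.X_pow_card_pow_sub_X_ne_zero _ hm hq1
  have key : Fintype.card (g.rootSet K) = g.natDegree :=
    card_rootSet_eq_natDegree (galois_poly_separable p _ hdvd)
      (SplittingField.splits g)
  have nd : g.natDegree = q ^ m := FiniteField.X_pow_card_pow_sub_X_natDegree_eq _ hm hq1
  rw [nd] at key
  -- the iterated Frobenius as an F-algebra hom
  have hfr : ∀ x : K, (iterateFrobenius K p (e * m)) x = x ^ q ^ m := by
    intro x
    rw [iterateFrobenius_def, hqe, ← pow_mul]
  have hcomm : ∀ r : F, (iterateFrobenius K p (e * m)) (algebraMap F K r) = algebraMap F K r := by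
    intro r
    rw [hfr, ← map_pow, FiniteField.pow_card_pow]
  let φ : K →ₐ[F] K := AlgHom.mk' (iterateFrobenius K p (e * m)) (fun c x => by
        simp only [Algebra.smul_def, map_mul, hcomm])
  have hsub : g.rootSet K ⊆ (AlgHom.equalizer φ (AlgHom.id F K) : Set K) := by
    intro x hx
    rw [mem_rootSet_of_ne aux] at hx
    simp only [hg, map_sub, map_pow, aeval_X, sub_eq_zero] at hx
    show φ x = x
    show (iterateFrobenius K p (e * m)) x = x
    rw [hfr, hx]
  have htop : AlgHom.equalizer φ (AlgHom.id F K) = ⊤ := by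
    rw [eq_top_iff]
    refine le_trans (le_of_eq (SplittingField.adjoin_rootSet g).symm) ?_
    exact Algebra.adjoin_le hsub
  have huniv : g.rootSet K = Set.univ := by
    rw [Set.eq_univ_iff_forall]
    intro x
    have hx : φ x = x := by
      have : x ∈ AlgHom.equalizer φ (AlgHom.id F K) := htop ▸ Algebra.mem_top
      exact this
    rw [mem_rootSet_of_ne aux]
    simp only [hg, map_sub, map_pow, aeval_X, sub_eq_zero]
    rw [← hfr x]
    exact hx
  have key' : Fintype.card K = q ^ m := by
    rw [← key]
    exact Fintype.card_congr ((Equiv.Set.univ K).symm.trans (Equiv.setCongr huniv.symm))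
  rw [Module.card_eq_pow_finrank (K := F) (V := K)] at key'
  exact Nat.pow_right_injective hq1 key'

theorem card_BigF (m : ℕ) (hm : m ≠ 0) [Fintype (BigF F m)] :
    Fintype.card (BigF F m) = (Fintype.card F) ^ m := by
  rw [Module.card_eq_pow_finrank (K := F) (V := BigF F m), finrank_BigF F m hm]

end GabidulinAux


noncomputable section QLin
variable {F : Type*} [Field F] [Fintype F] {K : Type*} [Field K] [Algebra F K]

theorem card_pow_add (j : ℕ) (x y : K) :
    (x + y) ^ (Fintype.card F) ^ j = x ^ (Fintype.card F) ^ j + y ^ (Fintype.card F) ^ j := by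
  obtain ⟨p, hp⟩ := CharP.exists F
  haveI : CharP F p := hp
  haveI : CharP K p := charP_of_injective_algebraMap' F p
  obtain ⟨e, hpp, hqe⟩ := FiniteField.card F p
  haveI : Fact p.Prime := ⟨hpp⟩
  rw [hqe, ← pow_mul, add_pow_char_pow]

theorem card_pow_smul (j : ℕ) (a : F) (x : K) :
    (a • x) ^ (Fintype.card F) ^ j = a • x ^ (Fintype.card F) ^ j := by
  rw [Algebra.smul_def, Algebra.smul_def, mul_pow, ← map_pow, FiniteField.pow_card_pow]

/-- The `q`-linearized map `x ↦ ∑ c i * x ^ (q ^ i)`. -/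
def qlin (s : ℕ) (c : Fin (s + 1) → K) : K →ₗ[F] K where
  toFun x := ∑ i : Fin (s + 1), c i * x ^ (Fintype.card F) ^ (i : ℕ)
  map_add' x y := by
    simp only [card_pow_add (F := F), mul_add]
    rw [Finset.sum_add_distrib]
  map_smul' a x := by
    simp only [card_pow_smul (F := F), RingHom.id_apply, Finset.smul_sum, mul_smul_comm]

theorem qlin_sub (s : ℕ) (c₁ c₂ : Fin (s + 1) → K) :
    qlin (F := F) s (c₁ - c₂) = qlin (F := F) s c₁ - qlin (F := F) s c₂ := by
  ext x
  simp [qlin, sub_mul, Finset.sum_sub_distrib]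

theorem finrank_ker_qlin_le [FiniteDimensional F K] (s : ℕ) (c : Fin (s + 1) → K)
    (hc : c ≠ 0) :
    Module.finrank F (LinearMap.ker (qlin (F := F) s c)) ≤ s := by
  classical
  haveI : Finite K := Module.finite_of_finite F
  haveI : Fintype K := Fintype.ofFinite K
  set q := Fintype.card F with hq
  have hq1 : 1 < q := Fintype.one_lt_card
  set P : K[X] := ∑ i : Fin (s + 1), C (c i) * X ^ (q ^ (i : ℕ)) with hP
  obtain ⟨i0, hi0⟩ := Function.ne_iff.mp hc
  have hPne : P ≠ 0 := by
    intro h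
    have hco : P.coeff (q ^ (i0 : ℕ)) = c i0 := by
      rw [hP, finset_sum_coeff]
      rw [Finset.sum_eq_single i0]
      · simp
      · intro i _ hne
        have : q ^ (i : ℕ) ≠ q ^ (i0 : ℕ) := fun hh =>
          hne (Fin.ext (Nat.pow_right_injective hq1 hh))
        simp only [coeff_C_mul, coeff_X_pow, if_neg (Ne.symm this), mul_zero]
      · simp
    rw [h] at hco
    simp only [coeff_zero] at hco
    exact hi0 hco.symm
  have hdeg : P.natDegree ≤ q ^ s := by
    refine natDegree_sum_le_of_forall_le _ _ fun i _ => ?_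
    refine (natDegree_C_mul_le _ _).trans ?_
    rw [natDegree_X_pow]
    exact Nat.pow_le_pow_right (Nat.le_of_lt hq1) (Fin.is_le i)
  have heval : ∀ x : K, P.eval x = qlin (F := F) s c x := by
    intro x
    simp [hP, qlin, eval_finset_sum, hq]
  have hsub : (LinearMap.ker (qlin (F := F) s c) : Set K).toFinset ⊆ P.roots.toFinset := by
    intro x hx
    rw [Set.mem_toFinset, SetLike.mem_coe, LinearMap.mem_ker] at hx
    rw [Multiset.mem_toFinset, mem_roots hPne]
    exact (heval x).trans hx
  have hcardle : Fintype.card (LinearMap.ker (qlin (F := F) s c)) ≤ q ^ s := by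
    calc Fintype.card (LinearMap.ker (qlin (F := F) s c))
        = (LinearMap.ker (qlin (F := F) s c) : Set K).toFinset.card := (Set.toFinset_card _).symm
      _ ≤ P.roots.toFinset.card := Finset.card_le_card hsub
      _ ≤ Multiset.card P.roots := P.roots.toFinset_card_le
      _ ≤ P.natDegree := P.card_roots'
      _ ≤ q ^ s := hdeg
  rw [Module.card_eq_pow_finrank (K := F) (V := LinearMap.ker (qlin (F := F) s c))] at hcardle
  exact (Nat.pow_le_pow_iff_right hq1).mp hcardle

end QLin


section Graphs
variable {F : Type*} [Field F] {V W : Type*} [AddCommGroup V] [Module F V]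
  [AddCommGroup W] [Module F W]

theorem finrank_graph [FiniteDimensional F V] (f : V →ₗ[F] W) :
    Module.finrank F (LinearMap.graph f) = Module.finrank F V := by
  rw [LinearMap.graph_eq_range_prod]
  exact LinearMap.finrank_range_of_inj fun x y h => congrArg Prod.fst h

theorem graph_injective : Function.Injective (LinearMap.graph : (V →ₗ[F] W) → _) := by
  intro f g h
  ext x
  have : (x, f x) ∈ g.graph := by rw [← h]; exact (f.mem_graph_iff _).mpr rfl
  exact (g.mem_graph_iff _).mp this

theorem finrank_graph_inf_le [FiniteDimensional F V] (f g : V →ₗ[F] W) :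
    Module.finrank F ↥(LinearMap.graph f ⊓ LinearMap.graph g) ≤
      Module.finrank F (LinearMap.ker (f - g)) := by
  let T : ↥(LinearMap.graph f ⊓ LinearMap.graph g) →ₗ[F] ↥(LinearMap.ker (f - g)) :=
    { toFun := fun x => ⟨x.1.1, by
        have h1 := (Submodule.mem_inf.mp x.2).1
        have h2 := (Submodule.mem_inf.mp x.2).2
        rw [LinearMap.mem_graph_iff] at h1 h2
        simp only [LinearMap.mem_ker, LinearMap.sub_apply]
        rw [← h1, ← h2, sub_self]⟩
      map_add' := fun x y => rfl
      map_smul' := fun a x => rfl }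
  have hT : Function.Injective T := by
    rintro ⟨⟨a, b⟩, hx⟩ ⟨⟨a', b'⟩, hx'⟩ h
    have ha : a = a' := congrArg Subtype.val h
    have hb : b = f a := (LinearMap.mem_graph_iff _ _).mp (Submodule.mem_inf.mp hx).1
    have hb' : b' = f a' := (LinearMap.mem_graph_iff _ _).mp (Submodule.mem_inf.mp hx').1
    subst ha
    simp [hb, hb']
  exact LinearMap.finrank_le_finrank_of_injective hT

end Graphs

theorem statement2 (q n k d : ℕ) (hq : IsPrimePow q)
    (hk : 2 ≤ 2 * k) (hkn : 2 * k ≤ n)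
    (hd : 2 ≤ d) (hdk : d ≤ 2 * k) (hde : Even d)
    (F : Type*) [Field F] [Fintype F] (hF : Fintype.card F = q) :
    ∃ C : Finset (Submodule F (Fin n → F)),
      C.card = q ^ ((n - k) * (k - d / 2 + 1)) ∧
      (∀ U ∈ C, Module.finrank F ↥U = k) ∧
      (∀ U ∈ C, ∀ W ∈ C, U ≠ W → d ≤ subspaceDist F U W) := by
  classical
  obtain ⟨d2, hd2⟩ := hde
  set δ := d / 2 with hδdef
  have hδ : d = 2 * δ := by omega
  have hδ1 : 1 ≤ δ := by omega
  have hδk : δ ≤ k := by omega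
  have hk1 : 1 ≤ k := by omega
  set m := n - k with hmdef
  have hkm : k ≤ m := by omega
  have hm0 : m ≠ 0 := by omega
  set s := k - δ with hsdef
  have hsk : s < k := by omega
  -- the extension field of degree m
  set K := BigF F m with hK
  haveI : Fintype K := Fintype.ofFinite _
  have hrK : Module.finrank F K = m := finrank_BigF F m hm0
  have hcK : Fintype.card K = q ^ m := by rw [card_BigF F m hm0, hF]
  -- an injection of F^k into K
  let B : Module.Basis (Fin m) F K := Module.finBasisOfFinrankEq F K hrK
  let ι : (Fin k → F) →ₗ[F] K :=
    (Pi.basisFun F (Fin k)).constr F (fun j => B (Fin.castLE hkm j))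
  have hιapp : ∀ x : Fin k → F, ι x = ∑ j, x j • B (Fin.castLE hkm j) := by
    intro x
    simp [ι, Module.Basis.constr_apply_fintype]
  have hli : LinearIndependent F (fun j : Fin k => B (Fin.castLE hkm j)) :=
    B.linearIndependent.comp _ (Fin.castLE_injective hkm)
  have hιker : LinearMap.ker ι = ⊥ := by
    rw [Submodule.eq_bot_iff]
    intro x hx
    rw [LinearMap.mem_ker, hιapp] at hx
    funext j
    exact Fintype.linearIndependent_iff.mp hli x hx j
  have hιinj : Function.Injective ι := LinearMap.ker_eq_bot.mp hιker
  -- the code maps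
  let fc : (Fin (s + 1) → K) → ((Fin k → F) →ₗ[F] K) := fun c => (qlin (F := F) s c).comp ι
  have hfc_sub : ∀ c₁ c₂, fc c₁ - fc c₂ = fc (c₁ - c₂) := by
    intro c₁ c₂
    simp only [fc, qlin_sub, LinearMap.sub_comp]
  have hker : ∀ c : Fin (s + 1) → K, c ≠ 0 → Module.finrank F (LinearMap.ker (fc c)) ≤ s := by
    intro c hc
    have hmem : ∀ x ∈ LinearMap.ker (fc c), ι x ∈ LinearMap.ker (qlin (F := F) s c) := by
      intro x hx
      rw [LinearMap.mem_ker] at hx ⊢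
      exact hx
    let ψ : ↥(LinearMap.ker (fc c)) →ₗ[F] ↥(LinearMap.ker (qlin (F := F) s c)) :=
      ι.restrict hmem
    have hψ : Function.Injective ψ := by
      intro a b h
      have : ι a.1 = ι b.1 := congrArg Subtype.val h
      exact Subtype.ext (hιinj this)
    exact (LinearMap.finrank_le_finrank_of_injective hψ).trans
      (finrank_ker_qlin_le s c hc)
  have hfc_inj : Function.Injective fc := by
    intro c₁ c₂ h
    by_contra hne
    have h0 : fc (c₁ - c₂) = 0 := by rw [← hfc_sub, h, sub_self]
    have : Module.finrank F (LinearMap.ker (fc (c₁ - c₂))) ≤ s :=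
      hker _ (sub_ne_zero.mpr hne)
    rw [h0, LinearMap.ker_zero, finrank_top, Module.finrank_fin_fun] at this
    omega
  -- transfer to Fin n → F
  have hfr_prod : Module.finrank F ((Fin k → F) × K) = Module.finrank F (Fin n → F) := by
    rw [Module.finrank_prod, Module.finrank_fin_fun, hrK, Module.finrank_fin_fun]
    omega
  obtain ⟨e⟩ := FiniteDimensional.nonempty_linearEquiv_of_finrank_eq hfr_prod
  let UU : (Fin (s + 1) → K) → Submodule F (Fin n → F) := fun c =>
    (LinearMap.graph (fc c)).map e.toLinearMap
  have hUU_inj : Function.Injective UU := by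
    intro c₁ c₂ h
    exact hfc_inj (graph_injective (Submodule.map_injective_of_injective e.injective h))
  have hUU_rank : ∀ c, Module.finrank F ↥(UU c) = k := by
    intro c
    rw [LinearEquiv.finrank_map_eq, finrank_graph, Module.finrank_fin_fun]
  refine ⟨Finset.image UU Finset.univ, ?_, ?_, ?_⟩
  · rw [Finset.card_image_of_injective _ hUU_inj, Finset.card_univ, Fintype.card_fun,
      hcK, Fintype.card_fin, ← pow_mul]
  · intro U hU
    obtain ⟨c, _, rfl⟩ := Finset.mem_image.mp hU
    exact hUU_rank c
  · intro U hU W hW hUW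
    obtain ⟨c₁, _, rfl⟩ := Finset.mem_image.mp hU
    obtain ⟨c₂, _, rfl⟩ := Finset.mem_image.mp hW
    have hc : c₁ ≠ c₂ := fun h => hUW (by rw [h])
    have hinf : Module.finrank F ↥(UU c₁ ⊓ UU c₂) ≤ s := by
      have hmapinf : UU c₁ ⊓ UU c₂ =
          ((LinearMap.graph (fc c₁)) ⊓ (LinearMap.graph (fc c₂))).map e.toLinearMap := by
        exact (Submodule.map_inf _ e.injective).symm
      rw [hmapinf, LinearEquiv.finrank_map_eq]
      refine (finrank_graph_inf_le (fc c₁) (fc c₂)).trans ?_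
      rw [hfc_sub]
      exact hker _ (sub_ne_zero.mpr hc)
    rw [subspaceDist, hUU_rank c₁, hUU_rank c₂]
    omega
end

section
/- (Construction D.) Let q be a prime power, d an even integer with 2 ≤ d ≤ 2k, and Δ an integer with k ≤ Δ < n. If there exists an (n−Δ, N, d, k)_q constant dimension code, then there exists an (n, q^{Δ(k−d/2+1)}·N, d, k)_q constant dimension code all of whose codewords U satisfy dim(π_{n−Δ}(U)) = k, where π_{n−Δ} is the projection of 𝔽_q^n onto the first n−Δ coordinates (equivalently, all identifying vectors of the codewords have their k ones among the first n−Δ positions). -/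
section Aux

open Polynomial

variable (F : Type*) [Field F] [Fintype F]

local notation "qcard" => Fintype.card F

lemma my_ext (Δ : ℕ) (hΔ : Δ ≠ 0) :
    Module.finrank F (SplittingField (X ^ qcard ^ Δ - X : F[X])) = Δ ∧
    Nat.card (SplittingField (X ^ qcard ^ Δ - X : F[X])) = qcard ^ Δ := by
  set E := SplittingField (X ^ qcard ^ Δ - X : F[X]) with hE
  set p := ringChar F with hpdef
  haveI hp : Fact p.Prime := ⟨CharP.char_is_prime F p⟩
  obtain ⟨s, hps, hcard⟩ := FiniteField.card F p
  haveI : CharP E p := charP_of_injective_algebraMap (algebraMap F E).injective p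
  have hq2 : 1 < qcard := Fintype.one_lt_card
  haveI : Finite E := Module.finite_of_finite F
  haveI : Fintype E := Fintype.ofFinite E
  set g : F[X] := X ^ qcard ^ Δ - X with hg
  have aux : g ≠ 0 := FiniteField.X_pow_card_pow_sub_X_ne_zero _ hΔ hq2
  have hsep : g.Separable := by
    have : p ∣ qcard ^ Δ := by
      rw [hcard]
      exact dvd_pow (dvd_pow_self p (by exact_mod_cast s.ne_zero)) hΔ
    exact galois_poly_separable p _ this
  have key : Fintype.card (g.rootSet E) = g.natDegree :=
    card_rootSet_eq_natDegree hsep (SplittingField.splits g)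
  have ndeg : g.natDegree = qcard ^ Δ :=
    FiniteField.X_pow_card_pow_sub_X_natDegree_eq _ hΔ hq2
  have expo : qcard ^ Δ = p ^ (↑s * Δ) := by rw [hcard, ← pow_mul]
  set φ := iterateFrobenius E p (↑s * Δ) with hφdef
  have hφ : ∀ z : E, φ z = z ^ qcard ^ Δ := fun z => by
    rw [hφdef, iterateFrobenius_def]
    exact congrArg (z ^ ·) expo.symm
  have mem_iff : ∀ x : E, x ∈ g.rootSet E ↔ φ x = x := by
    intro x
    rw [mem_rootSet_of_ne aux, hφ]
    simp [g, sub_eq_zero]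
  have huniv : g.rootSet E = Set.univ := by
    rw [Set.eq_univ_iff_forall]
    suffices h : ∀ (x) (_ : x ∈ (⊤ : Subalgebra F E)), x ∈ g.rootSet E by simpa using h
    rw [← SplittingField.adjoin_rootSet]
    simp_rw [Algebra.mem_adjoin_iff]
    intro x hx
    rw [mem_iff]
    refine Subring.closure_induction ?_ ?_ ?_ ?_ ?_ ?_ hx
    · rintro y (⟨r, rfl⟩ | hy)
      · rw [hφ, ← map_pow, FiniteField.pow_card_pow]
      · rw [← mem_iff]; exact hy
    · exact map_zero φ
    · exact map_one φ
    · intro a b _ _ ha hb; rw [map_add, ha, hb]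
    · intro a _ ha; rw [map_neg, ha]
    · intro a b _ _ ha hb; rw [map_mul, ha, hb]
  have cardE : Nat.card E = qcard ^ Δ := by
    rw [ndeg] at key
    simp_rw [huniv, ← Fintype.ofEquiv_card (Equiv.Set.univ _)] at key
    rw [@Nat.card_eq_fintype_card E (Fintype.ofEquiv _ (Equiv.Set.univ E))]
    exact key
  have hfr : Module.finrank F E = Δ := by
    have h2 := Module.card_eq_pow_finrank (K := F) (V := E)
    rw [← Nat.card_eq_fintype_card, cardE] at h2
    exact (Nat.pow_right_injective hq2 h2.symm)
  exact ⟨hfr, cardE⟩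

open Module in
lemma rank_code {k Δ δ : ℕ}
    (hδ1 : 1 ≤ δ) (hδk : δ ≤ k) (hkΔ : k ≤ Δ) :
    ∃ D : Finset ((Fin k → F) →ₗ[F] (Fin Δ → F)),
      D.card = qcard ^ (Δ * (k - δ + 1)) ∧
      ∀ A ∈ D, ∀ B ∈ D, A ≠ B →
        Module.finrank F ↥(LinearMap.ker (A - B)) ≤ k - δ := by
  classical
  have hq2 : 1 < qcard := Fintype.one_lt_card
  have hΔ0 : Δ ≠ 0 := by omega
  set E := SplittingField (X ^ qcard ^ Δ - X : F[X]) with hEdef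
  obtain ⟨hfr, hcardE⟩ := my_ext F Δ hΔ0
  haveI : Finite E := Module.finite_of_finite F
  haveI : Fintype E := Fintype.ofFinite E
  set p := ringChar F with hpdef
  haveI hp : Fact p.Prime := ⟨CharP.char_is_prime F p⟩
  obtain ⟨s, hps, hcardF⟩ := FiniteField.card F p
  haveI : CharP E p := charP_of_injective_algebraMap (algebraMap F E).injective p
  have expo : ∀ i : ℕ, qcard ^ i = p ^ (↑s * i) := fun i => by rw [hcardF, ← pow_mul]
  set e := k - δ with hedef
  -- the injection ι : F^k → E
  let bE : Basis (Fin Δ) F E := (Module.finBasis F E).reindex (finCongr hfr)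
  let v : Fin k → E := fun i => bE (Fin.castLE hkΔ i)
  have hv : LinearIndependent F v :=
    bE.linearIndependent.comp _ (Fin.castLE_injective hkΔ)
  let ι : (Fin k → F) →ₗ[F] E := (Pi.basisFun F (Fin k)).constr F v
  have hι : ∀ x, ι x = ∑ i, x i • v i := by
    intro x
    rw [Basis.constr_apply_fintype]
    simp
  have hιinj : Function.Injective ι := by
    rw [← LinearMap.ker_eq_bot, eq_bot_iff]
    intro x hx
    have h0 : ∑ i, x i • v i = 0 := by rw [← hι]; exact hx
    have hz := (Fintype.linearIndependent_iff.mp hv) x h0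
    exact funext hz
  -- the qcard-linearized maps
  let T : (Fin (e+1) → E) → (E →ₗ[F] E) := fun a =>
    { toFun := fun x => ∑ i : Fin (e+1), a i * x ^ qcard ^ (i : ℕ)
      map_add' := by
        intro x y
        rw [← Finset.sum_add_distrib]
        refine Finset.sum_congr rfl fun i _ => ?_
        rw [← mul_add]
        congr 1
        simp only [expo (i : ℕ)]
        rw [add_pow_char_pow]
      map_smul' := by
        intro c x
        simp only [RingHom.id_apply, Finset.smul_sum]
        refine Finset.sum_congr rfl fun i _ => ?_
        rw [Algebra.smul_def, Algebra.smul_def, mul_pow, ← map_pow,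
          FiniteField.pow_card_pow]
        ring }
  have hT : ∀ a x, T a x = ∑ i : Fin (e+1), a i * x ^ qcard ^ (i : ℕ) := fun a x => rfl
  have hTsub : ∀ a b, T (a - b) = T a - T b := by
    intro a b
    ext x
    simp only [LinearMap.sub_apply, hT, Pi.sub_apply, sub_mul, Finset.sum_sub_distrib]
  -- the rank-metric code maps
  let fmap : (Fin (e+1) → E) → ((Fin k → F) →ₗ[F] (Fin Δ → F)) := fun a =>
    bE.equivFun.toLinearMap ∘ₗ (T a ∘ₗ ι)
  have hfsub : ∀ a b, fmap (a - b) = fmap a - fmap b := by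
    intro a b
    ext x j
    simp [fmap, hTsub]
  -- kernel bound
  have hker : ∀ a : Fin (e+1) → E, a ≠ 0 →
      Module.finrank F ↥(LinearMap.ker (fmap a)) ≤ e := by
    intro a ha
    have hkereq : LinearMap.ker (fmap a) = LinearMap.ker (T a ∘ₗ ι) := by
      ext x
      simp [fmap, LinearMap.mem_ker]
    -- the polynomial
    set P : E[X] := ∑ i : Fin (e+1), C (a i) * X ^ qcard ^ (i : ℕ) with hPdef
    have hPeval : ∀ x : E, P.eval x = T a x := by
      intro x
      rw [hPdef, eval_finset_sum, hT]
      simp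
    obtain ⟨i₀, hi₀⟩ := Function.ne_iff.mp ha
    have hcoeff : P.coeff (qcard ^ (i₀ : ℕ)) = a i₀ := by
      rw [hPdef, finset_sum_coeff, Finset.sum_eq_single i₀]
      · simp [coeff_C_mul, coeff_X_pow]
      · intro b _ hb
        rw [coeff_C_mul, coeff_X_pow, if_neg, mul_zero]
        intro hqe
        exact hb ((Fin.ext (Nat.pow_right_injective hq2 hqe)).symm)
      · intro hmem
        exact absurd (Finset.mem_univ i₀) hmem
    have hPne : P ≠ 0 := fun h0 => hi₀ (by rw [← hcoeff, h0, coeff_zero]; rfl)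
    have hPdeg : P.natDegree ≤ qcard ^ e := by
      refine Polynomial.natDegree_sum_le_of_forall_le _ _ fun i _ => ?_
      refine le_trans (natDegree_C_mul_le _ _) ?_
      rw [natDegree_X_pow]
      exact Nat.pow_le_pow_right (by omega) (by omega)
    -- cardinality of the kernel
    have hcardker : Nat.card ↥(LinearMap.ker (T a ∘ₗ ι)) ≤ qcard ^ e := by
      have hinj2 : Function.Injective
          (fun x : ↥(LinearMap.ker (T a ∘ₗ ι)) =>
            (⟨ι x.1, by
              rw [Multiset.mem_toFinset, mem_roots hPne, IsRoot.def, hPeval]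
              exact x.2⟩ : ↑P.roots.toFinset)) := by
        intro x y hxy
        exact Subtype.ext (hιinj (congrArg Subtype.val hxy))
      calc Nat.card ↥(LinearMap.ker (T a ∘ₗ ι))
          ≤ Nat.card ↑P.roots.toFinset := Nat.card_le_card_of_injective _ hinj2
        _ = P.roots.toFinset.card := Nat.card_eq_finsetCard _
        _ ≤ Multiset.card P.roots := Multiset.toFinset_card_le _
        _ ≤ P.natDegree := P.card_roots'
        _ ≤ qcard ^ e := hPdeg
    have hcard2 : Nat.card ↥(LinearMap.ker (T a ∘ₗ ι)) =
        qcard ^ Module.finrank F ↥(LinearMap.ker (T a ∘ₗ ι)) := by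
      haveI : Fintype ↥(LinearMap.ker (T a ∘ₗ ι)) := Fintype.ofFinite _
      rw [Nat.card_eq_fintype_card]
      exact card_eq_pow_finrank (K := F)
    rw [hkereq]
    rw [hcard2] at hcardker
    exact (Nat.pow_le_pow_iff_right hq2).mp hcardker
  have hfinj : Function.Injective fmap := by
    intro a b hab
    by_contra hne
    have hsub0 : fmap (a - b) = 0 := by rw [hfsub, hab, sub_self]
    have h1 := hker (a - b) (sub_ne_zero_of_ne hne)
    rw [hsub0, LinearMap.ker_zero] at h1
    have h2 : Module.finrank F ↥(⊤ : Submodule F (Fin k → F)) = k := by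
      rw [finrank_top, finrank_pi]
      simp
    omega
  refine ⟨Finset.image fmap Finset.univ, ?_, ?_⟩
  · rw [Finset.card_image_of_injective _ hfinj, Finset.card_univ, Fintype.card_fun]
    rw [← Nat.card_eq_fintype_card, hcardE]
    simp [← pow_mul, hedef]
  · intro A hA B hB hAB
    obtain ⟨a, _, rfl⟩ := Finset.mem_image.mp hA
    obtain ⟨b, _, rfl⟩ := Finset.mem_image.mp hB
    rw [← hfsub]
    exact hker _ (sub_ne_zero_of_ne (fun h => hAB (congrArg fmap h)))


section LiftMachinery

variable (K : Type*) [Field K]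

def tauL (n m : ℕ) : (Fin m → K) →ₗ[K] (Fin n → K) where
  toFun x := fun j => if hj : (j : ℕ) < m then x ⟨j, hj⟩ else 0
  map_add' x y := by funext j; by_cases h : (j : ℕ) < m <;> simp [h]
  map_smul' c x := by funext j; by_cases h : (j : ℕ) < m <;> simp [h]

def sigL (n m : ℕ) (h : m ≤ n) : (Fin n → K) →ₗ[K] (Fin m → K) :=
  LinearMap.funLeft K K (Fin.castLE h)

def rhoL (n m Δ : ℕ) (hmn : m + Δ = n) : (Fin Δ → K) →ₗ[K] (Fin n → K) where
  toFun x := fun j => if hj : m ≤ (j : ℕ) then x ⟨(j : ℕ) - m, by have := j.isLt; omega⟩ else 0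
  map_add' x y := by funext j; by_cases h : m ≤ (j : ℕ) <;> simp [h]
  map_smul' c x := by funext j; by_cases h : m ≤ (j : ℕ) <;> simp [h]

def pi2L (n m Δ : ℕ) (hmn : m + Δ = n) : (Fin n → K) →ₗ[K] (Fin Δ → K) where
  toFun x := fun i => x ⟨m + (i : ℕ), by have := i.isLt; omega⟩
  map_add' x y := by funext i; simp
  map_smul' c x := by funext i; simp

variable {n m Δ : ℕ} (hmn : m + Δ = n)

lemma sig_tau (x : Fin m → K) : sigL K n m (Nat.le.intro hmn) (tauL K n m x) = x := by
  funext i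
  simp only [sigL, tauL, LinearMap.funLeft_apply, LinearMap.coe_mk, AddHom.coe_mk]
  rw [dif_pos (by simp [i.isLt] : ((Fin.castLE (Nat.le.intro hmn) i : Fin n) : ℕ) < m)]
  exact congrArg x (Fin.ext rfl)

lemma pi2_tau (x : Fin m → K) : pi2L K n m Δ hmn (tauL K n m x) = 0 := by
  funext i
  simp only [pi2L, tauL, LinearMap.coe_mk, AddHom.coe_mk]
  rw [dif_neg (by omega)]
  rfl

lemma sig_rho (x : Fin Δ → K) : sigL K n m (Nat.le.intro hmn) (rhoL K n m Δ hmn x) = 0 := by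
  funext i
  simp only [sigL, rhoL, LinearMap.funLeft_apply, LinearMap.coe_mk, AddHom.coe_mk]
  rw [dif_neg (by have := i.isLt; simp only [Fin.coe_castLE]; omega)]
  rfl

lemma pi2_rho (x : Fin Δ → K) : pi2L K n m Δ hmn (rhoL K n m Δ hmn x) = x := by
  funext i
  simp only [pi2L, rhoL, LinearMap.coe_mk, AddHom.coe_mk]
  rw [dif_pos (by omega)]
  congr 1
  exact Fin.ext (by simp)

lemma tau_sig_eq_zeroProj (x : Fin n → K) :
    tauL K n m (sigL K n m (Nat.le.intro hmn) x) = zeroProj K n m x := by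
  funext j
  simp only [tauL, sigL, zeroProj, LinearMap.funLeft_apply, LinearMap.coe_mk, AddHom.coe_mk]
  by_cases h : (j : ℕ) < m
  · rw [dif_pos h, if_pos h]
    congr 1
  · rw [dif_neg h, if_neg h]

end LiftMachinery

section LiftSp

variable {K : Type*} [Field K] {n m Δ k : ℕ} (hmn : m + Δ = n)

/-- The lift generator map. -/
noncomputable def LmapD (j : (Fin k → K) →ₗ[K] (Fin m → K))
    (A : (Fin k → K) →ₗ[K] (Fin Δ → K)) : (Fin k → K) →ₗ[K] (Fin n → K) :=
  (tauL K n m) ∘ₗ j + (rhoL K n m Δ hmn) ∘ₗ A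

noncomputable def liftSp (j : (Fin k → K) →ₗ[K] (Fin m → K))
    (A : (Fin k → K) →ₗ[K] (Fin Δ → K)) : Submodule K (Fin n → K) :=
  LinearMap.range (LmapD hmn j A)

variable {j j' : (Fin k → K) →ₗ[K] (Fin m → K)} {A B : (Fin k → K) →ₗ[K] (Fin Δ → K)}

lemma sig_Lmap (c : Fin k → K) :
    sigL K n m (Nat.le.intro hmn) (LmapD hmn j A c) = j c := by
  simp only [LmapD, LinearMap.add_apply, LinearMap.coe_comp, Function.comp_apply, map_add]
  rw [sig_tau K hmn, sig_rho K hmn, add_zero]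

lemma pi2_Lmap (c : Fin k → K) :
    pi2L K n m Δ hmn (LmapD hmn j A c) = A c := by
  simp only [LmapD, LinearMap.add_apply, LinearMap.coe_comp, Function.comp_apply, map_add]
  rw [pi2_tau K hmn, pi2_rho K hmn, zero_add]

lemma Lmap_inj (hj : Function.Injective j) : Function.Injective (LmapD hmn j A) := by
  intro c c' hcc
  apply hj
  rw [← sig_Lmap hmn (A := A) c, ← sig_Lmap hmn (A := A) c', hcc]

lemma liftSp_finrank (hj : Function.Injective j) :
    Module.finrank K ↥(liftSp hmn j A) = k := by
  rw [liftSp, LinearMap.finrank_range_of_inj (Lmap_inj hmn hj)]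
  simp [Module.finrank_pi]

lemma liftSp_map_sig (hj : Function.Injective j) :
    Submodule.map (sigL K n m (Nat.le.intro hmn)) (liftSp hmn j A) = LinearMap.range j := by
  rw [liftSp, ← LinearMap.range_comp]
  have h : (sigL K n m (Nat.le.intro hmn)) ∘ₗ (LmapD hmn j A) = j :=
    LinearMap.ext fun c => sig_Lmap hmn c
  rw [h]

lemma liftSp_map_zeroProj :
    Submodule.map (zeroProj K n m) (liftSp hmn j A) = LinearMap.range ((tauL K n m) ∘ₗ j) := by
  rw [liftSp, ← LinearMap.range_comp]
  have h : (zeroProj K n m) ∘ₗ (LmapD hmn j A) = (tauL K n m) ∘ₗ j :=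
    LinearMap.ext fun c => by
      rw [LinearMap.comp_apply, LinearMap.comp_apply, ← tau_sig_eq_zeroProj K hmn,
        sig_Lmap hmn]
  rw [h]

lemma tau_inj (h : m ≤ n) : Function.Injective (tauL K n m) := by
  intro x y hxy
  funext i
  have h2 := congrFun hxy ⟨i, lt_of_lt_of_le i.isLt h⟩
  simpa [tauL] using h2

lemma liftSp_projDim (hj : Function.Injective j) :
    Module.finrank K ↥(Submodule.map (zeroProj K n m) (liftSp hmn j A)) = k := by
  rw [liftSp_map_zeroProj hmn]
  rw [LinearMap.finrank_range_of_inj (f := tauL K n m ∘ₗ j)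
    (by rw [LinearMap.coe_comp]; exact (tau_inj (Nat.le.intro hmn)).comp hj)]
  simp [Module.finrank_pi]

lemma liftSp_inter_same (hj : Function.Injective j) :
    liftSp hmn j A ⊓ liftSp hmn j B =
      Submodule.map (LmapD hmn j A) (LinearMap.ker (A - B)) := by
  apply le_antisymm
  · rintro x ⟨⟨c, rfl⟩, ⟨c', hc'⟩⟩
    have hsig : j c' = j c := by
      rw [← sig_Lmap hmn (A := B) c', ← sig_Lmap hmn (A := A) c, hc']
    have hcc : c' = c := hj hsig
    subst hcc
    have hpi : B c' = A c' := by
      rw [← pi2_Lmap hmn (A := B) c', ← pi2_Lmap hmn (A := A) c', hc']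
    exact ⟨c', by simp only [SetLike.mem_coe, LinearMap.mem_ker, LinearMap.sub_apply, hpi,
      sub_self], rfl⟩
  · rintro x ⟨c, hc, rfl⟩
    simp only [SetLike.mem_coe, LinearMap.mem_ker, LinearMap.sub_apply, sub_eq_zero] at hc
    refine ⟨⟨c, rfl⟩, ⟨c, ?_⟩⟩
    simp only [LmapD, LinearMap.add_apply, LinearMap.coe_comp, Function.comp_apply, hc]

lemma liftSp_eq_iff (hj : Function.Injective j) (hAB : liftSp hmn j A = liftSp hmn j B) :
    A = B := by
  refine LinearMap.ext fun c => ?_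
  have hmem : LmapD hmn j A c ∈ liftSp hmn j B := by
    rw [← hAB]; exact ⟨c, rfl⟩
  obtain ⟨c', hc'⟩ := hmem
  have hcc : c' = c := hj
    (by rw [← sig_Lmap hmn (A := B) c', ← sig_Lmap hmn (A := A) c, hc'])
  subst hcc
  rw [← pi2_Lmap hmn (A := A) c', ← pi2_Lmap hmn (A := B) c', hc']

lemma liftSp_inter_finrank_same (hj : Function.Injective j) :
    Module.finrank K ↥(liftSp hmn j A ⊓ liftSp hmn j B) =
      Module.finrank K ↥(LinearMap.ker (A - B)) := by
  rw [liftSp_inter_same hmn hj]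
  exact (LinearEquiv.finrank_eq
    (Submodule.equivMapOfInjective _ (Lmap_inj hmn hj) _)).symm

lemma liftSp_inter_finrank_le (hj : Function.Injective j) (hj' : Function.Injective j') :
    Module.finrank K ↥(liftSp hmn j A ⊓ liftSp hmn j' B) ≤
      Module.finrank K ↥(LinearMap.range j ⊓ LinearMap.range j') := by
  have hmem : ∀ x ∈ liftSp hmn j A ⊓ liftSp hmn j' B,
      sigL K n m (Nat.le.intro hmn) x ∈ LinearMap.range j ⊓ LinearMap.range j' := by
    rintro x ⟨⟨c, rfl⟩, ⟨c', hc'⟩⟩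
    constructor
    · exact ⟨c, (sig_Lmap hmn c).symm⟩
    · exact ⟨c', by rw [← hc', sig_Lmap hmn]⟩
  set Φ : ↥(liftSp hmn j A ⊓ liftSp hmn j' B) →ₗ[K] ↥(LinearMap.range j ⊓ LinearMap.range j') :=
    LinearMap.codRestrict _ ((sigL K n m (Nat.le.intro hmn)) ∘ₗ
      (liftSp hmn j A ⊓ liftSp hmn j' B).subtype) (fun x => hmem x.1 x.2) with hΦ
  have hΦinj : Function.Injective Φ := by
    intro x y hxy
    have hs : sigL K n m (Nat.le.intro hmn) x.1 = sigL K n m (Nat.le.intro hmn) y.1 := by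
      have := congrArg Subtype.val hxy
      simpa [hΦ, LinearMap.codRestrict] using this
    obtain ⟨⟨c, hc⟩, -⟩ := x.2
    obtain ⟨⟨c', hc'⟩, -⟩ := y.2
    apply Subtype.ext
    rw [← hc, ← hc'] at hs ⊢
    rw [sig_Lmap hmn, sig_Lmap hmn] at hs
    rw [hj hs]
  exact LinearMap.finrank_le_finrank_of_injective hΦinj

end LiftSp


end Aux

theorem statement5 (q n k d Δ N : ℕ) (hq : IsPrimePow q)
    (hd : 2 ≤ d) (hdk : d ≤ 2 * k) (hde : Even d)
    (hkΔ : k ≤ Δ) (hΔn : Δ < n)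
    (F : Type*) [Field F] [Fintype F] (hF : Fintype.card F = q)
    (h : ∃ C : Finset (Submodule F (Fin (n - Δ) → F)),
      C.card = N ∧
      (∀ U ∈ C, Module.finrank F ↥U = k) ∧
      (∀ U ∈ C, ∀ W ∈ C, U ≠ W → d ≤ subspaceDist F U W)) :
    ∃ C : Finset (Submodule F (Fin n → F)),
      C.card = q ^ (Δ * (k - d / 2 + 1)) * N ∧
      (∀ U ∈ C, Module.finrank F ↥U = k) ∧
      (∀ U ∈ C, ∀ W ∈ C, U ≠ W → d ≤ subspaceDist F U W) ∧
      (∀ U ∈ C, projDim F U (n - Δ) = k) := by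

  classical
  subst hF
  obtain ⟨C, hCcard, hCdim, hCdist⟩ := h
  have hmn : (n - Δ) + Δ = n := by omega
  obtain ⟨t, ht⟩ := hde
  set δ := d / 2 with hδ
  have hδt : δ = t := by omega
  have hδ1 : 1 ≤ δ := by omega
  have hδk : δ ≤ k := by omega
  obtain ⟨D, hDcard, hDker⟩ := rank_code F (k := k) (Δ := Δ) hδ1 hδk hkΔ
  let jm : ∀ U : Submodule F (Fin (n - Δ) → F), Module.finrank F ↥U = k →
      ((Fin k → F) →ₗ[F] (Fin (n - Δ) → F)) := fun U hU =>
    U.subtype ∘ₗ (((Module.finBasis F ↥U).reindex (finCongr hU)).equivFun.symm).toLinearMap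
  have hjinj : ∀ U hU, Function.Injective (jm U hU) := fun U hU =>
    U.injective_subtype.comp (LinearEquiv.injective _)
  have hjrange : ∀ U hU, LinearMap.range (jm U hU) = U := fun U hU => by
    simp only [jm, LinearMap.range_comp, LinearEquiv.range, Submodule.map_top,
      Submodule.range_subtype]
  let G : Submodule F (Fin (n - Δ) → F) × ((Fin k → F) →ₗ[F] (Fin Δ → F)) →
      Submodule F (Fin n → F) := fun p =>
    if hU : Module.finrank F ↥p.1 = k then liftSp hmn (jm p.1 hU) p.2 else ⊥
  have hG : ∀ (U : Submodule F (Fin (n - Δ) → F)) (hU : Module.finrank F ↥U = k)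
      (A : (Fin k → F) →ₗ[F] (Fin Δ → F)), G (U, A) = liftSp hmn (jm U hU) A :=
    fun U hU A => dif_pos hU
  have hGsig : ∀ (U : Submodule F (Fin (n - Δ) → F)) (hU : Module.finrank F ↥U = k)
      (A : (Fin k → F) →ₗ[F] (Fin Δ → F)),
      Submodule.map (sigL F n (n - Δ) (Nat.le.intro hmn)) (G (U, A)) = U := by
    intro U hU A
    rw [hG U hU A, liftSp_map_sig hmn (hjinj U hU), hjrange U hU]
  have hinjOn : Set.InjOn G ↑(C ×ˢ D) := by
    rintro ⟨U, A⟩ hUA ⟨W, B⟩ hWB hGeq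
    obtain ⟨hU, hA⟩ := Finset.mem_product.mp (Finset.mem_coe.mp hUA)
    obtain ⟨hW, hB⟩ := Finset.mem_product.mp (Finset.mem_coe.mp hWB)
    have hU' := hCdim U hU
    have hW' := hCdim W hW
    have hUW : U = W := by
      rw [← hGsig U hU' A, ← hGsig W hW' B, hGeq]
    subst hUW
    rw [hG U hU' A, hG U hU' B] at hGeq
    exact Prod.ext rfl (liftSp_eq_iff hmn (hjinj U hU') hGeq)
  refine ⟨Finset.image G (C ×ˢ D), ?_, ?_, ?_, ?_⟩
  · rw [Finset.card_image_of_injOn hinjOn, Finset.card_product, hCcard, hDcard]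
    rw [mul_comm]
  · intro V hV
    obtain ⟨⟨U, A⟩, hmem, rfl⟩ := Finset.mem_image.mp hV
    obtain ⟨hU, hA⟩ := Finset.mem_product.mp hmem
    rw [hG U (hCdim U hU) A]
    exact liftSp_finrank hmn (hjinj U (hCdim U hU))
  · intro V hV V' hV' hVne
    obtain ⟨⟨U, A⟩, hmem, rfl⟩ := Finset.mem_image.mp hV
    obtain ⟨⟨W, B⟩, hmem', rfl⟩ := Finset.mem_image.mp hV'
    obtain ⟨hU, hA⟩ := Finset.mem_product.mp hmem
    obtain ⟨hW, hB⟩ := Finset.mem_product.mp hmem'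
    have hU' := hCdim U hU
    have hW' := hCdim W hW
    by_cases hUW : U = W
    · subst hUW
      have hABne : A ≠ B := by
        rintro rfl
        exact hVne rfl
      rw [hG U hU' A, hG U hW' B]
      unfold subspaceDist
      rw [liftSp_finrank hmn (hjinj U hU'), liftSp_finrank hmn (hjinj U hW')]
      have hker := hDker A hA B hB hABne
      have heq := liftSp_inter_finrank_same hmn (hjinj U hU') (A := A) (B := B)
      rw [heq]
      omega
    · rw [hG U hU' A, hG W hW' B]
      unfold subspaceDist
      rw [liftSp_finrank hmn (hjinj U hU'), liftSp_finrank hmn (hjinj W hW')]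
      have hle := liftSp_inter_finrank_le hmn (hjinj U hU') (hjinj W hW') (A := A) (B := B)
      rw [hjrange U hU', hjrange W hW'] at hle
      have hUWd := hCdist U hU W hW hUW
      unfold subspaceDist at hUWd
      rw [hCdim U hU, hCdim W hW] at hUWd
      have hUWk : Module.finrank F ↥(U ⊓ W) ≤ k := by
        rw [← hCdim U hU]
        exact Submodule.finrank_mono inf_le_left
      omega
  · intro V hV
    obtain ⟨⟨U, A⟩, hmem, rfl⟩ := Finset.mem_image.mp hV
    obtain ⟨hU, hA⟩ := Finset.mem_product.mp hmem
    have hU' := hCdim U hU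
    rw [hG U hU' A]
    show Module.finrank F ↥(Submodule.map (zeroProj F n (n - Δ)) (liftSp hmn (jm U hU') A)) = k
    exact liftSp_projDim hmn (hjinj U hU')
end

section
/- (Combination lemma for linkage-type constructions.) Let q be a prime power, d an even integer with 2 ≤ d ≤ 2k, and 0 ≤ Δ < n. Let 𝒞_1 be an (n, N_1, d, k)_q constant dimension code all of whose members are contained in the span of the first n−Δ standard basis vectors of 𝔽_q^n, and let 𝒞_2 be an (n, N_2, d, k)_q constant dimension code all of whose members W satisfy dim(π_{n−Δ}(W)) ≤ k − d/2, where π_{n−Δ} is the projection onto the first n−Δ coordinates. Then 𝒞_1 and 𝒞_2 are disjoint and 𝒞_1 ∪ 𝒞_2 is an (n, N_1 + N_2, d, k)_q constant dimension code. -/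
open scoped Classical

theorem statement7 (q n k d Δ N₁ N₂ : ℕ) (hq : IsPrimePow q)
    (hd : 2 ≤ d) (hdk : d ≤ 2 * k) (hde : Even d) (hΔn : Δ < n)
    (F : Type*) [Field F] [Fintype F] (hF : Fintype.card F = q)
    (C₁ C₂ : Finset (Submodule F (Fin n → F)))
    (hcard₁ : C₁.card = N₁)
    (hdim₁ : ∀ U ∈ C₁, Module.finrank F ↥U = k)
    (hdist₁ : ∀ U ∈ C₁, ∀ W ∈ C₁, U ≠ W → d ≤ subspaceDist F U W)
    (hsupp₁ : ∀ U ∈ C₁, ∀ x ∈ U, ∀ j : Fin n, n - Δ ≤ (j : ℕ) → x j = 0)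
    (hcard₂ : C₂.card = N₂)
    (hdim₂ : ∀ W ∈ C₂, Module.finrank F ↥W = k)
    (hdist₂ : ∀ U ∈ C₂, ∀ W ∈ C₂, U ≠ W → d ≤ subspaceDist F U W)
    (hproj₂ : ∀ W ∈ C₂, projDim F W (n - Δ) ≤ k - d / 2) :
    Disjoint C₁ C₂ ∧
    (C₁ ∪ C₂).card = N₁ + N₂ ∧
    (∀ U ∈ C₁ ∪ C₂, Module.finrank F ↥U = k) ∧
    (∀ U ∈ C₁ ∪ C₂, ∀ W ∈ C₁ ∪ C₂, U ≠ W → d ≤ subspaceDist F U W) := by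
  obtain ⟨r, hr⟩ := hde
  -- projection fixes elements of members of C₁
  have hfix : ∀ U ∈ C₁, ∀ x ∈ U, zeroProj F n (n - Δ) x = x := by
    intro U hU x hx
    funext j
    by_cases h : (j : ℕ) < n - Δ
    · simp [zeroProj, h]
    · simp only [zeroProj, LinearMap.coe_mk, AddHom.coe_mk, h, if_false]
      exact (hsupp₁ U hU x hx j (Nat.le_of_not_lt h)).symm
  have hmapeq : ∀ U ∈ C₁, U.map (zeroProj F n (n - Δ)) = U := by
    intro U hU
    apply le_antisymm
    · rintro y ⟨x, hx, rfl⟩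
      rw [hfix U hU x hx]; exact hx
    · intro x hx
      exact ⟨x, hx, hfix U hU x hx⟩
  have hk1 : 1 ≤ k := by omega
  -- disjointness
  have hdisj : Disjoint C₁ C₂ := by
    rw [Finset.disjoint_left]
    intro U hU1 hU2
    have h1 : projDim F U (n - Δ) = k := by
      rw [projDim, hmapeq U hU1]; exact hdim₁ U hU1
    have h2 := hproj₂ U hU2
    omega
  -- cross distance
  have hcross : ∀ U ∈ C₁, ∀ W ∈ C₂, d ≤ subspaceDist F U W ∧ d ≤ subspaceDist F W U := by
    intro U hU W hW
    have hle : U ⊓ W ≤ W.map (zeroProj F n (n - Δ)) := by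
      intro x hx
      exact ⟨x, hx.2, hfix U hU x hx.1⟩
    have hm : Module.finrank F ↥(U ⊓ W) ≤ k - d / 2 :=
      le_trans (Submodule.finrank_mono hle) (hproj₂ W hW)
    have hUk := hdim₁ U hU
    have hWk := hdim₂ W hW
    have hcomm : (W ⊓ U : Submodule F (Fin n → F)) = U ⊓ W := inf_comm U W ▸ rfl
    constructor
    · rw [subspaceDist, hUk, hWk]; omega
    · rw [subspaceDist, hUk, hWk, hcomm]; omega
  refine ⟨hdisj, ?_, ?_, ?_⟩
  · rw [Finset.card_union_of_disjoint hdisj, hcard₁, hcard₂]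
  · intro U hU
    rcases Finset.mem_union.1 hU with h | h
    · exact hdim₁ U h
    · exact hdim₂ U h
  · intro U hU W hW hne
    rcases Finset.mem_union.1 hU with h1 | h1 <;> rcases Finset.mem_union.1 hW with h2 | h2
    · exact hdist₁ U h1 W h2 hne
    · exact (hcross U h1 W h2).1
    · exact (hcross W h2 U h1).2
    · exact hdist₂ U h1 W h2 hne
end

section
/- Let q be a prime power. If there exists a (7, N, 4, 3)_q constant dimension code, then there exists an (11, q^8·N + q^4 + q^3 + 2q^2 + q + 1, 4, 3)_q constant dimension code; that is, A_q(11,4;3) ≥ q^8·A_q(7,4;3) + q^4 + q^3 + 2q^2 + q + 1. -/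
open Polynomial Module

noncomputable section
namespace CDC13

section Ext
variable (F : Type*) [Field F] [Fintype F]

abbrev ExtF (m : ℕ) : Type _ := SplittingField (X ^ (Fintype.card F) ^ m - X : F[X])

variable (m : ℕ)

instance : Field (ExtF F m) := inferInstanceAs (Field (SplittingField _))
instance : Algebra F (ExtF F m) := inferInstanceAs (Algebra F (SplittingField _))
instance : FiniteDimensional F (ExtF F m) := by dsimp only [ExtF]; infer_instance

theorem extF_finrank (hm : m ≠ 0) : Module.finrank F (ExtF F m) = m := by
  obtain ⟨p, hp⟩ := CharP.exists F
  haveI hpF : CharP F p := hp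
  haveI : Fact p.Prime := ⟨(CharP.char_is_prime F p)⟩
  haveI : CharP (ExtF F m) p := charP_of_injective_algebraMap (algebraMap F (ExtF F m)).injective p
  haveI : Fintype (ExtF F m) := Fintype.ofFinite _
  set q := Fintype.card F with hq
  have hq1 : 1 < q := Fintype.one_lt_card
  set g_poly := (X ^ q ^ m - X : F[X])
  have aux : g_poly ≠ 0 := FiniteField.X_pow_card_pow_sub_X_ne_zero _ hm hq1
  obtain ⟨n, hn, hqpn⟩ := FiniteField.card F p
  have hqm : q ^ m = p ^ ((n:ℕ) * m) := by rw [hq, hqpn, ← pow_mul]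
  have hpq : p ∣ q ^ m := by
    rw [hqm]; exact dvd_pow_self p (by positivity)
  have key : Fintype.card (g_poly.rootSet (ExtF F m)) = g_poly.natDegree :=
    card_rootSet_eq_natDegree (galois_poly_separable p _ hpq)
      (SplittingField.splits (X ^ q ^ m - X : F[X]))
  have nat_degree_eq : g_poly.natDegree = q ^ m :=
    FiniteField.X_pow_card_pow_sub_X_natDegree_eq _ hm hq1
  rw [nat_degree_eq] at key
  suffices g_poly.rootSet (ExtF F m) = Set.univ by
    simp_rw [this, ← Fintype.ofEquiv_card (Equiv.Set.univ _)] at key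
    rw [@card_eq_pow_finrank F _ _ _ _ _ (_)] at key
    exact Nat.pow_right_injective hq1 key
  rw [Set.eq_univ_iff_forall]
  suffices ∀ (x) (hx : x ∈ (⊤ : Subalgebra F (ExtF F m))),
      x ∈ (X ^ q ^ m - X : F[X]).rootSet (ExtF F m) by simpa
  rw [← SplittingField.adjoin_rootSet]
  simp_rw [Algebra.mem_adjoin_iff]
  intro x hx
  refine Subring.closure_induction ?_ ?_ ?_ ?_ ?_ ?_ hx <;> simp_rw [mem_rootSet_of_ne (show (X ^ q ^ m - X : F[X]) ≠ 0 from aux)]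
  · rintro x (⟨r, rfl⟩ | hx)
    · simp only [g_poly, map_sub, map_pow, aeval_X]
      rw [← map_pow, FiniteField.pow_card_pow, sub_self]
    · dsimp only [ExtF] at hx
      rwa [mem_rootSet_of_ne aux] at hx
  · rw [← coeff_zero_eq_aeval_zero']
    simp only [g_poly, coeff_X_pow, coeff_X_zero, sub_zero, _root_.map_eq_zero, ite_eq_right_iff,
      one_ne_zero, coeff_sub]
    intro hn'
    exact absurd (eq_zero_of_pow_eq_zero hn'.symm) (by positivity)
  · simp [g_poly]
  · simp only [g_poly, aeval_X_pow, aeval_X, map_sub, sub_eq_zero]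
    intro x y _ _ hx hy
    simp only [hqm] at hx hy ⊢
    rw [add_pow_char_pow, hx, hy]
  · intro x _ hx
    simp only [g_poly, sub_eq_zero, aeval_X_pow, aeval_X, map_sub, sub_neg_eq_add] at *
    simp only [hqm] at hx ⊢
    rw [neg_pow, hx, neg_one_pow_char_pow]
    simp
  · simp only [g_poly, aeval_X_pow, aeval_X, map_sub, mul_pow, sub_eq_zero]
    intro x y _ _ hx hy
    rw [hx, hy]

end Ext

variable {F : Type*} [Field F] [Fintype F]
variable {K : Type*} [Field K] [Algebra F K]

/-- Frobenius x ↦ x^q as an F-linear map. -/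
theorem exists_frob : ∃ φ : K →ₗ[F] K, ∀ x, φ x = x ^ (Fintype.card F) := by
  obtain ⟨p, hp⟩ := CharP.exists F
  haveI hpF : CharP F p := hp
  haveI : Fact p.Prime := ⟨CharP.char_is_prime F p⟩
  haveI : CharP K p := charP_of_injective_algebraMap (algebraMap F K).injective p
  obtain ⟨n, hn, hqpn⟩ := FiniteField.card F p
  refine ⟨⟨⟨fun x => x ^ (Fintype.card F), fun x y => ?_⟩, fun c x => ?_⟩, fun _ => rfl⟩
  · simp only [hqpn]
    exact add_pow_char_pow x y p n
  · simp only [Algebra.smul_def, mul_pow, ← map_pow, FiniteField.pow_card, RingHom.id_apply]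

/-- kernel of x ↦ c x + d x^q is at most 1-dimensional over F, for (c,d) ≠ 0. -/
theorem ker_le_one [FiniteDimensional F K] (hq1 : 1 < Fintype.card F) {φ : K →ₗ[F] K}
    (hφ : ∀ x, φ x = x ^ (Fintype.card F)) {c d : K} (hcd : ¬(c = 0 ∧ d = 0)) :
    finrank F (LinearMap.ker (LinearMap.mulLeft F c + (LinearMap.mulLeft F d) ∘ₗ φ)) ≤ 1 := by
  classical
  by_cases hd : d = 0
  · have hc : c ≠ 0 := fun h => hcd ⟨h, hd⟩
    have : LinearMap.ker (LinearMap.mulLeft F c + (LinearMap.mulLeft F d) ∘ₗ φ) = ⊥ := by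
      rw [LinearMap.ker_eq_bot']
      intro x hx
      simp only [LinearMap.add_apply, LinearMap.mulLeft_apply, LinearMap.comp_apply, hd,
        zero_mul, add_zero] at hx
      exact (mul_eq_zero.mp hx).resolve_left hc
    rw [this, finrank_bot]; omega
  · set q := Fintype.card F with hqdef
    set P : K[X] := C d * X ^ q + C c * X with hP
    have hPne : P ≠ 0 := by
      intro h0
      have : P.coeff q = d := by
        simp [hP, coeff_X_pow, coeff_X, coeff_C_mul]
        intro h1; exact absurd h1.symm (by omega)
      rw [h0] at this; simp at this; exact hd this.symm
    have hdeg : P.natDegree ≤ q := by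
      refine le_trans (natDegree_add_le _ _) ?_
      simp only [sup_le_iff]
      constructor
      · exact le_trans (natDegree_C_mul_le _ _) (by simp)
      · refine le_trans (natDegree_C_mul_le _ _) (le_trans (natDegree_X_le) (by omega))
    set W := LinearMap.ker (LinearMap.mulLeft F c + (LinearMap.mulLeft F d) ∘ₗ φ) with hW
    haveI : Finite K := Module.finite_of_finite F
    haveI : Fintype K := Fintype.ofFinite K
    haveI : Fintype W := Fintype.ofFinite W
    have hroot : ∀ x : K, x ∈ W → x ∈ P.roots.toFinset := by
      intro x hx
      rw [hW, LinearMap.mem_ker] at hx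
      simp only [LinearMap.add_apply, LinearMap.mulLeft_apply, LinearMap.comp_apply, hφ] at hx
      rw [Multiset.mem_toFinset, mem_roots hPne]
      simp only [IsRoot.def, hP, eval_add, eval_mul, eval_C, eval_pow, eval_X]
      linear_combination hx
    have hcardW : Fintype.card W ≤ q := by
      calc Fintype.card W ≤ Fintype.card {x // x ∈ P.roots.toFinset} := by
            apply Fintype.card_le_of_injective (fun w => ⟨w.1, hroot w.1 w.2⟩)
            intro a b hab
            have h2 := congrArg Subtype.val hab
            simp only at h2
            exact Subtype.ext h2

        _ = P.roots.toFinset.card := Fintype.card_coe _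
        _ ≤ Multiset.card P.roots := Multiset.toFinset_card_le _
        _ ≤ P.natDegree := P.card_roots'
        _ ≤ q := hdeg
    have hcard : Fintype.card W = q ^ finrank F W := card_eq_pow_finrank
    rw [hcard] at hcardW
    exact (Nat.pow_le_pow_iff_right hq1).mp (by rw [pow_one]; exact hcardW)

theorem exists_mrd [FiniteDimensional F K] (hq1 : 1 < Fintype.card F)
    (hrk : finrank F K = 4) :
    ∃ D : K × K → ((Fin 3 → F) →ₗ[F] K),
      Function.Injective D ∧
      (∀ a b : K × K, a ≠ b → finrank F (LinearMap.ker (D a - D b)) ≤ 1) := by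
  classical
  obtain ⟨φ, hφ⟩ := exists_frob (F := F) (K := K)
  set bK : Basis (Fin 4) F K := Module.finBasisOfFinrankEq F K hrk with hbK
  set j : (Fin 3 → F) →ₗ[F] K :=
    (Pi.basisFun F (Fin 3)).constr F (fun i => bK (Fin.castLE (by omega) i)) with hj
  have hjapp : ∀ x : Fin 3 → F, j x = ∑ i, x i • bK (Fin.castLE (by omega) i) := by
    intro x
    rw [hj, Basis.constr_apply_fintype]
    simp
  have hjinj : Function.Injective j := by
    rw [injective_iff_map_eq_zero]
    intro x hx
    rw [hjapp] at hx
    have hli : LinearIndependent F (fun i : Fin 3 => bK (Fin.castLE (by omega) i)) :=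
      bK.linearIndependent.comp _ (Fin.castLE_injective _)
    have := Fintype.linearIndependent_iff.mp hli x hx
    funext i; exact this i
  set M : K → K → (K →ₗ[F] K) :=
    fun c d => LinearMap.mulLeft F c + (LinearMap.mulLeft F d) ∘ₗ φ with hM
  have key : ∀ a b : K × K, a ≠ b →
      finrank F (LinearMap.ker ((M a.1 a.2) ∘ₗ j - (M b.1 b.2) ∘ₗ j)) ≤ 1 := by
    intro a b hab
    have hdiff : (M a.1 a.2) ∘ₗ j - (M b.1 b.2) ∘ₗ j = (M (a.1 - b.1) (a.2 - b.2)) ∘ₗ j := by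
      apply LinearMap.ext; intro x
      simp [hM, sub_mul, LinearMap.sub_apply, LinearMap.mulLeft_apply]
      ring
    rw [hdiff]
    have hcd : ¬(a.1 - b.1 = 0 ∧ a.2 - b.2 = 0) := by
      rintro ⟨h1, h2⟩
      exact hab (Prod.ext (sub_eq_zero.mp h1) (sub_eq_zero.mp h2))
    have hker := ker_le_one (K := K) hq1 hφ hcd
    set c := a.1 - b.1; set d := a.2 - b.2
    have hsub : ∀ x ∈ LinearMap.ker ((M c d) ∘ₗ j), j x ∈ LinearMap.ker (M c d) := by
      intro x hx
      rw [LinearMap.mem_ker] at hx ⊢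
      simpa using hx
    have hres : Function.Injective (j.restrict hsub) := by
      intro x y hxy
      have : j x.1 = j y.1 := congrArg Subtype.val hxy
      exact Subtype.ext (hjinj this)
    exact le_trans (LinearMap.finrank_le_finrank_of_injective hres) hker
  refine ⟨fun a => (M a.1 a.2) ∘ₗ j, ?_, key⟩
  intro a b hab
  by_contra hne
  have hab' : (M a.1 a.2) ∘ₗ j = (M b.1 b.2) ∘ₗ j := hab
  have h0 : (M a.1 a.2) ∘ₗ j - (M b.1 b.2) ∘ₗ j = 0 := by rw [hab', sub_self]
  have hk := key a b hne
  rw [h0, LinearMap.ker_zero] at hk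
  rw [finrank_top, Module.finrank_fin_fun] at hk
  omega

section Lines

variable (F : Type*) [Field F]

/-- normalized representatives of projective points of F^2 -/
def nv : F ⊕ Unit → (Fin 2 → F)
  | .inl a => ![1, a]
  | .inr _ => ![0, 1]

/-- complementary vector -/
def sg : F ⊕ Unit → (Fin 2 → F)
  | .inl _ => ![0, 1]
  | .inr _ => ![1, 0]

/-- coordinate functional along `sg` in the basis (nv s, sg s) -/
def psi : F ⊕ Unit → (Fin 2 → F) → F
  | .inl a, y => y 1 - a * y 0
  | .inr _, y => y 0

variable {F}

theorem nv_ne_zero (s : F ⊕ Unit) : nv F s ≠ 0 := by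
  cases s with
  | inl a => intro h; have := congrFun h 0; simp [nv] at this
  | inr u => intro h; have := congrFun h 1; simp [nv] at this

theorem nv_proportional {s s' : F ⊕ Unit} {b : F} (h : nv F s' = b • nv F s) :
    s' = s ∧ b = 1 := by
  cases s with
  | inl a =>
    cases s' with
    | inl a' =>
      have h0 := congrFun h 0
      have h1 := congrFun h 1
      simp [nv] at h0 h1
      subst h0; simp at h1; subst h1; exact ⟨rfl, rfl⟩
    | inr u =>
      have h0 := congrFun h 0
      have h1 := congrFun h 1
      simp [nv] at h0 h1
      rw [← h0] at h1; simp at h1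
  | inr u =>
    cases s' with
    | inl a' =>
      have h0 := congrFun h 0
      simp [nv] at h0
    | inr u' =>
      have h1 := congrFun h 1
      simp [nv] at h1
      exact ⟨rfl, h1.symm⟩

theorem psi_eval (s : F ⊕ Unit) (t b : F) :
    psi F s (t • sg F s + b • nv F s) = t := by
  cases s <;> simp [psi, sg, nv] <;> ring

/-- index type for our family of lines in F^2 × F^2 -/
abbrev LIdx (F : Type*) := (Matrix (Fin 2) (Fin 2) F) ⊕ (((F ⊕ Unit) × (F ⊕ Unit) × F) ⊕ Unit)

variable (F) in
/-- the family of lines (2-dim subspaces) of F^2 × F^2 -/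
noncomputable def lline : LIdx F → Submodule F ((Fin 2 → F) × (Fin 2 → F))
  | .inl m => LinearMap.range ((LinearMap.id : (Fin 2 → F) →ₗ[F] _).prod (Matrix.toLin' m))
  | .inr (.inl (s, u, t)) => Submodule.span F {(nv F u, t • sg F s), ((0 : Fin 2 → F), nv F s)}
  | .inr (.inr _) => LinearMap.range (LinearMap.inr F (Fin 2 → F) (Fin 2 → F))

theorem range_pair {β : Type*} (x y : β) : Set.range ![x, y] = {x, y} := by
  ext z
  simp [Fin.exists_fin_two]
  tauto

theorem lline_finrank (p : LIdx F) : finrank F (lline F p) = 2 := by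
  match p with
  | .inl m =>
    rw [lline, LinearMap.finrank_range_of_inj, Module.finrank_fin_fun]
    intro x y hxy
    exact congrArg Prod.fst hxy
  | .inr (.inl (s, u, t)) =>
    rw [lline, show ({(nv F u, t • sg F s), ((0 : Fin 2 → F), nv F s)} : Set _)
        = Set.range ![(nv F u, t • sg F s), ((0 : Fin 2 → F), nv F s)] by rw [range_pair]]
    rw [finrank_span_eq_card]
    · simp
    · rw [linearIndependent_fin2]
      constructor
      · intro h0
        simp only [Matrix.cons_val_one, Matrix.head_cons] at h0
        exact nv_ne_zero s (congrArg Prod.snd h0)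
      · intro a h0
        simp only [Matrix.cons_val_one, Matrix.head_cons, Matrix.cons_val_zero] at h0
        have h1 := congrArg Prod.fst h0
        simp only [Prod.smul_mk, smul_zero] at h1
        exact nv_ne_zero u h1.symm
  | .inr (.inr _) =>
    rw [lline, LinearMap.finrank_range_of_inj, Module.finrank_fin_fun]
    exact LinearMap.inr_injective

theorem mem_lline_graph {m : Matrix (Fin 2) (Fin 2) F} {v : (Fin 2 → F) × (Fin 2 → F)} :
    v ∈ lline F (.inl m) ↔ ∃ x, (x, m.mulVec x) = v := by
  simp [lline, LinearMap.mem_range, Matrix.toLin'_apply]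

theorem mem_lline_span {s u : F ⊕ Unit} {t : F} {v : (Fin 2 → F) × (Fin 2 → F)} :
    v ∈ lline F (.inr (.inl (s, u, t))) ↔
      ∃ a b : F, a • (nv F u, t • sg F s) + b • ((0 : Fin 2 → F), nv F s) = v := by
  rw [lline]; exact Submodule.mem_span_pair

theorem mem_lline_inr {v : (Fin 2 → F) × (Fin 2 → F)} {w : Unit} :
    v ∈ lline F (.inr (.inr w)) ↔ v.1 = 0 := by
  constructor
  · rintro ⟨y, rfl⟩; rfl
  · intro h
    exact ⟨v.2, by rw [LinearMap.inr_apply]; exact Prod.ext h.symm rfl⟩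

theorem lline_injective : Function.Injective (lline F) := by
  intro p p' h
  match p, p' with
  | .inl m, .inl m' =>
    congr 1
    have hmm : ∀ x, Matrix.mulVec m' x = Matrix.mulVec m x := by
      intro x
      have hx : ((x, m.mulVec x) : (Fin 2 → F) × (Fin 2 → F)) ∈ lline F (.inl m') := by
        rw [← h, mem_lline_graph]; exact ⟨x, rfl⟩
      rw [mem_lline_graph] at hx
      obtain ⟨x', hx'⟩ := hx
      have h1 : x' = x := congrArg Prod.fst hx'
      rw [h1] at hx'
      exact congrArg Prod.snd hx'
    apply Matrix.toLin'.injective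
    apply LinearMap.ext
    intro x
    simp [Matrix.toLin'_apply, hmm x]
  | .inl m, .inr (.inl (s, u, t)) =>
    exfalso
    have hx : ((0 : Fin 2 → F), nv F s) ∈ lline F (.inl m) := by
      rw [h, mem_lline_span]
      exact ⟨0, 1, by simp⟩
    rw [mem_lline_graph] at hx
    obtain ⟨x, hx⟩ := hx
    have h1 : x = 0 := congrArg Prod.fst hx
    rw [h1] at hx
    have h2 := congrArg Prod.snd hx
    simp [Matrix.mulVec_zero] at h2
    exact nv_ne_zero s h2.symm
  | .inr (.inl (s, u, t)), .inl m => 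
    exfalso
    have hx : ((0 : Fin 2 → F), nv F s) ∈ lline F (.inl m) := by
      rw [← h, mem_lline_span]
      exact ⟨0, 1, by simp⟩
    rw [mem_lline_graph] at hx
    obtain ⟨x, hx⟩ := hx
    have h1 : x = 0 := congrArg Prod.fst hx
    rw [h1] at hx
    have h2 := congrArg Prod.snd hx
    simp [Matrix.mulVec_zero] at h2
    exact nv_ne_zero s h2.symm
  | .inl m, .inr (.inr w) =>
    exfalso
    have hx : ((0 : Fin 2 → F), ![(0:F), 1]) ∈ lline F (.inl m) := by
      rw [h, mem_lline_inr]
    rw [mem_lline_graph] at hx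
    obtain ⟨x, hx⟩ := hx
    have h1 : x = 0 := congrArg Prod.fst hx
    rw [h1] at hx
    have h2 := congrArg Prod.snd hx
    simp [Matrix.mulVec_zero] at h2
    have := congrFun h2 1
    simp at this
  | .inr (.inr w), .inl m =>
    exfalso
    have hx : ((0 : Fin 2 → F), ![(0:F), 1]) ∈ lline F (.inl m) := by
      rw [← h, mem_lline_inr]
    rw [mem_lline_graph] at hx
    obtain ⟨x, hx⟩ := hx
    have h1 : x = 0 := congrArg Prod.fst hx
    rw [h1] at hx
    have h2 := congrArg Prod.snd hx
    simp [Matrix.mulVec_zero] at h2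
    have := congrFun h2 1
    simp at this
  | .inr (.inl (s, u, t)), .inr (.inr w) =>
    exfalso
    have hx : ((nv F u, t • sg F s) : (Fin 2 → F) × (Fin 2 → F)) ∈ lline F (.inr (.inr w)) := by
      rw [← h, mem_lline_span]
      exact ⟨1, 0, by simp⟩
    rw [mem_lline_inr] at hx
    exact nv_ne_zero u hx
  | .inr (.inr w), .inr (.inl (s, u, t)) =>
    exfalso
    have hx : ((nv F u, t • sg F s) : (Fin 2 → F) × (Fin 2 → F)) ∈ lline F (.inr (.inr w)) := by
      rw [h, mem_lline_span]
      exact ⟨1, 0, by simp⟩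
    rw [mem_lline_inr] at hx
    exact nv_ne_zero u hx
  | .inr (.inr w), .inr (.inr w') => rfl
  | .inr (.inl (s, u, t)), .inr (.inl (s', u', t')) =>
    -- the hard case
    have hs : s' = s := by
      have hx : ((0 : Fin 2 → F), nv F s') ∈ lline F (.inr (.inl (s, u, t))) := by
        rw [h, mem_lline_span]
        exact ⟨0, 1, by simp⟩
      rw [mem_lline_span] at hx
      obtain ⟨a, b, hab⟩ := hx
      have h1 := congrArg Prod.fst hab
      have h2 := congrArg Prod.snd hab
      simp only [Prod.fst_add, Prod.smul_mk, Prod.snd_add, smul_zero, add_zero, zero_add] at h1 h2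
      have ha : a = 0 := by
        by_contra ha
        have : nv F u = a⁻¹ • (0 : Fin 2 → F) := by
          rw [← h1]; rw [smul_smul, inv_mul_cancel₀ ha, one_smul]
        simp at this
        exact nv_ne_zero u this
      rw [ha, zero_smul, zero_add] at h2
      exact (nv_proportional h2.symm).1
    rw [hs] at h
    have hmem : ((nv F u', t' • sg F s) : (Fin 2 → F) × (Fin 2 → F))
        ∈ lline F (.inr (.inl (s, u, t))) := by
      rw [h, mem_lline_span]
      exact ⟨1, 0, by simp⟩
    rw [mem_lline_span] at hmem
    obtain ⟨a, b, hab⟩ := hmem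
    have h1 := congrArg Prod.fst hab
    have h2 := congrArg Prod.snd hab
    simp only [Prod.fst_add, Prod.smul_mk, Prod.snd_add, smul_zero, add_zero, zero_add] at h1 h2
    obtain ⟨hu, ha⟩ := nv_proportional h1.symm
    subst hu
    rw [ha, one_smul] at h2
    have ht : t' = t := by
      have h3 := psi_eval (F := F) s t b
      rw [h2] at h3
      have h4 : psi F s (t' • sg F s) = t' := by
        have h5 := psi_eval (F := F) s t' 0
        simpa using h5
      rw [h4] at h3
      exact h3
    rw [hs, ht]

end Lines

universe u

theorem exists_mrd_package {F : Type u} [Field F] [Fintype F] (hq1 : 1 < Fintype.card F) :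
    ∃ (ι : Type u) (_ : Fintype ι), Fintype.card ι = Fintype.card F ^ 8 ∧
      ∃ D : ι → ((Fin 3 → F) →ₗ[F] ((Fin 2 → F) × (Fin 2 → F))),
        Function.Injective D ∧
        ∀ a b, a ≠ b → finrank F (LinearMap.ker (D a - D b)) ≤ 1 := by
  classical
  set K := ExtF F 4 with hK
  have hrk : finrank F K = 4 := extF_finrank F 4 (by norm_num)
  haveI : Finite K := Module.finite_of_finite F
  haveI : Fintype K := Fintype.ofFinite K
  have hcardK : Fintype.card K = Fintype.card F ^ 4 := by
    rw [card_eq_pow_finrank (K := F) (V := K), hrk]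
  obtain ⟨D0, hD0inj, hD0ker⟩ := exists_mrd (F := F) (K := K) hq1 hrk
  -- linear equivalence K ≃ₗ (Fin 2 → F) × (Fin 2 → F)
  have e1 : K ≃ₗ[F] (Fin 4 → F) := (Module.finBasisOfFinrankEq F K hrk).equivFun
  have e2 : (Fin 4 → F) ≃ₗ[F] (Fin 2 ⊕ Fin 2 → F) :=
    LinearEquiv.funCongrLeft F F finSumFinEquiv
  have e3 : (Fin 2 ⊕ Fin 2 → F) ≃ₗ[F] ((Fin 2 → F) × (Fin 2 → F)) :=
    LinearEquiv.sumArrowLequivProdArrow (Fin 2) (Fin 2) F F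
  set κ : K ≃ₗ[F] ((Fin 2 → F) × (Fin 2 → F)) := e1.trans (e2.trans e3) with hκ
  refine ⟨K × K, inferInstance, ?_, fun a => κ.toLinearMap ∘ₗ D0 a, ?_, ?_⟩
  · rw [Fintype.card_prod, hcardK]; ring
  · intro a b hab
    have : D0 a = D0 b := by
      apply LinearMap.ext
      intro x
      have := congrArg (fun f => κ.symm ((f : (Fin 3 → F) →ₗ[F] _) x)) hab
      simpa using this
    exact hD0inj this
  · intro a b hab
    have hker : LinearMap.ker (κ.toLinearMap ∘ₗ D0 a - κ.toLinearMap ∘ₗ D0 b)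
        = LinearMap.ker (D0 a - D0 b) := by
      have hcomp : κ.toLinearMap ∘ₗ D0 a - κ.toLinearMap ∘ₗ D0 b
          = κ.toLinearMap ∘ₗ (D0 a - D0 b) := by
        apply LinearMap.ext; intro x; simp
      rw [hcomp, LinearMap.ker_comp, LinearEquiv.ker, Submodule.comap_bot]
    rw [hker]
    exact hD0ker a b hab

section Extra

variable {F : Type*} [Field F]

/-- encoding of `F ⊕ Unit` into `F × F` -/
def pv : F ⊕ Unit → F × F := Sum.elim (fun a => (0, a)) (fun _ => (1, 0))

theorem pv_injective : Function.Injective (pv (F := F)) := by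
  intro s s' h
  cases s with
  | inl a =>
    cases s' with
    | inl a' =>
      have h2 := congrArg Prod.snd h
      simp only [pv, Sum.elim_inl] at h2
      rw [h2]
    | inr u =>
      have h2 := congrArg Prod.fst h
      simp [pv] at h2
  | inr u =>
    cases s' with
    | inl a' =>
      have h2 := congrArg Prod.fst h
      simp [pv] at h2
    | inr u' => rfl

/-- injective encoding of the line index set into `F^6` -/
def iota : LIdx F → Fin 6 → F
  | .inl m => ![0, 0, m 0 0, m 0 1, m 1 0, m 1 1]
  | .inr (.inl (s, u, t)) => ![1, (pv s).1, (pv s).2, (pv u).1, (pv u).2, t]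
  | .inr (.inr _) => ![0, 1, 0, 0, 0, 0]

theorem iota_injective : Function.Injective (iota (F := F)) := by
  intro p p' h
  match p, p' with
  | .inl m, .inl m' =>
    congr 1
    ext i j
    fin_cases i <;> fin_cases j
    · exact congrFun h 2
    · exact congrFun h 3
    · exact congrFun h 4
    · exact congrFun h 5
  | .inl m, .inr (.inl (s, u, t)) => exact absurd (congrFun h 0) (by simp [iota])
  | .inr (.inl (s, u, t)), .inl m => exact absurd (congrFun h 0) (by simp [iota])
  | .inl m, .inr (.inr w) => exact absurd (congrFun h 1) (by simp [iota])
  | .inr (.inr w), .inl m => exact absurd (congrFun h 1) (by simp [iota])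
  | .inr (.inl (s, u, t)), .inr (.inr w) => exact absurd (congrFun h 0) (by simp [iota])
  | .inr (.inr w), .inr (.inl (s, u, t)) => exact absurd (congrFun h 0) (by simp [iota])
  | .inr (.inr w), .inr (.inr w') => rfl
  | .inr (.inl (s, u, t)), .inr (.inl (s', u', t')) =>
    have hs : pv s = pv s' := by
      have h1 := congrFun h 1
      have h2 := congrFun h 2
      simp [iota] at h1 h2
      exact Prod.ext h1 h2
    have hu : pv u = pv u' := by
      have h1 := congrFun h 3
      have h2 := congrFun h 4
      simp [iota] at h1 h2
      exact Prod.ext h1 h2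
    have ht : t = t' := by
      have h1 := congrFun h 5
      simpa [iota] using h1
    rw [pv_injective hs, pv_injective hu, ht]

/-- the extra projective point attached to a line index -/
def phifn (p : LIdx F) : Fin 7 → F := Fin.cons 1 (iota p)

theorem phifn_zero (p : LIdx F) : phifn p 0 = 1 := rfl

theorem phifn_injective : Function.Injective (phifn (F := F)) := by
  intro p p' h
  apply iota_injective
  have := congrArg Fin.tail h
  simpa [phifn, Fin.tail_cons] using this

theorem phifn_ne_zero (p : LIdx F) : phifn p ≠ (0 : Fin 7 → F) := by
  intro h
  have := congrFun h 0
  rw [phifn_zero] at this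
  exact one_ne_zero this

/-- the extra planes -/
noncomputable def Tpl (p : LIdx F) :
    Submodule F ((Fin 7 → F) × ((Fin 2 → F) × (Fin 2 → F))) :=
  (lline F p).map (LinearMap.inr F _ _) ⊔ Submodule.span F {(phifn p, 0)}

theorem mem_Tpl_iff {p : LIdx F} {v : (Fin 7 → F) × ((Fin 2 → F) × (Fin 2 → F))} :
    v ∈ Tpl p ↔ ∃ c : F, ∃ l ∈ lline F p, v = (c • phifn p, l) := by
  constructor
  · intro hv
    rw [Tpl, Submodule.mem_sup] at hv
    obtain ⟨a, ha, b, hb, rfl⟩ := hv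
    obtain ⟨l, hl, rfl⟩ := Submodule.mem_map.mp ha
    obtain ⟨c, rfl⟩ := Submodule.mem_span_singleton.mp hb
    refine ⟨c, l, hl, ?_⟩
    simp [Prod.ext_iff, LinearMap.inr_apply]
  · rintro ⟨c, l, hl, rfl⟩
    rw [Tpl, Submodule.mem_sup]
    refine ⟨(0, l), Submodule.mem_map.mpr ⟨l, hl, rfl⟩,
      c • (phifn p, 0), Submodule.smul_mem _ c (Submodule.mem_span_singleton_self _), ?_⟩
    simp [Prod.ext_iff]

theorem Tpl_finrank (p : LIdx F) : finrank F (Tpl p) = 3 := by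
  classical
  have hinf : ((lline F p).map (LinearMap.inr F (Fin 7 → F) _)
      ⊓ Submodule.span F {((phifn p, 0) : (Fin 7 → F) × ((Fin 2 → F) × (Fin 2 → F)))}) = ⊥ := by
    rw [eq_bot_iff]
    rintro v ⟨hv1, hv2⟩
    obtain ⟨c, rfl⟩ := Submodule.mem_span_singleton.mp hv2
    obtain ⟨l, _, hl⟩ := Submodule.mem_map.mp hv1
    have h1 : c • phifn p = 0 := by
      have h2 := congrArg Prod.fst hl
      simp only [LinearMap.inr_apply, Prod.smul_mk] at h2
      exact h2.symm
    have hc : c = 0 := by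
      by_contra hc
      exact phifn_ne_zero p (by
        have := congrArg (fun x => c⁻¹ • x) h1
        simpa [smul_smul, inv_mul_cancel₀ hc] using this)
    simp [hc]
  have hrk1 : finrank F ((lline F p).map (LinearMap.inr F (Fin 7 → F) _)) = 2 := by
    exact (((lline F p).equivMapOfInjective _ LinearMap.inr_injective).symm.finrank_eq).trans
      (lline_finrank p)
  have hrk2 : finrank F (Submodule.span F
      {((phifn p, 0) : (Fin 7 → F) × ((Fin 2 → F) × (Fin 2 → F)))}) = 1 := by
    apply finrank_span_singleton
    intro h0
    exact phifn_ne_zero p (congrArg Prod.fst h0)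
  have := Submodule.finrank_sup_add_finrank_inf_eq
    ((lline F p).map (LinearMap.inr F (Fin 7 → F) _))
    (Submodule.span F {((phifn p, 0) : (Fin 7 → F) × ((Fin 2 → F) × (Fin 2 → F)))})
  rw [hinf, hrk1, hrk2, finrank_bot] at this
  rw [Tpl]
  omega

end Extra

section Planes

variable {F : Type*} [Field F]

theorem inf_le_one_of_rank_two {M : Type*} [AddCommGroup M] [Module F M]
    [FiniteDimensional F M] {A B : Submodule F M}
    (hA : finrank F A = 2) (hB : finrank F B = 2) (hAB : A ≠ B) :
    finrank F (A ⊓ B : Submodule F M) ≤ 1 := by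
  by_contra hc
  push_neg at hc
  have h2 : 2 ≤ finrank F (A ⊓ B : Submodule F M) := hc
  have hA' : A ⊓ B = A :=
    Submodule.eq_of_le_of_finrank_le inf_le_left (by omega)
  have hB' : A ⊓ B = B :=
    Submodule.eq_of_le_of_finrank_le inf_le_right (by omega)
  exact hAB (hA'.symm.trans hB')

theorem smul_phifn_zero {p : LIdx F} {c : F} : (c • phifn p) 0 = c := by
  simp [phifn_zero]

theorem Tpl_inf_le_one {p p' : LIdx F} (h : p ≠ p') :
    finrank F (Tpl p ⊓ Tpl p' : Submodule F _) ≤ 1 := by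
  have hle : Tpl p ⊓ Tpl p' ≤
      ((lline F p ⊓ lline F p').map (LinearMap.inr F (Fin 7 → F) _)) := by
    rintro v ⟨hv, hv'⟩
    obtain ⟨c, l, hl, rfl⟩ := mem_Tpl_iff.mp hv
    obtain ⟨c', l', hl', heq⟩ := mem_Tpl_iff.mp hv'
    have hfst := congrArg Prod.fst heq
    have hsnd := congrArg Prod.snd heq
    simp only at hfst hsnd
    have hcc : c = c' := by
      have := congrFun hfst 0
      simpa [phifn_zero] using this
    by_cases hc0 : c = 0
    · refine Submodule.mem_map.mpr ⟨l, ⟨hl, ?_⟩, ?_⟩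
      · rw [hsnd]; exact hl'
      · simp [hc0, LinearMap.inr_apply]
    · exfalso
      rw [← hcc] at hfst
      have : phifn p = phifn p' := smul_right_injective _ hc0 hfst
      exact h (phifn_injective this)
  refine le_trans (Submodule.finrank_mono hle) ?_
  refine le_trans (Submodule.finrank_map_le _ _) ?_
  exact inf_le_one_of_rank_two (lline_finrank p) (lline_finrank p')
    (fun e => h (lline_injective e))

theorem Tpl_le_lline {p p' : LIdx F} (h : Tpl p = Tpl p') : lline F p ≤ lline F p' := by
  intro l hl
  have hv : ((0 : Fin 7 → F), l) ∈ Tpl p' := by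
    rw [← h, mem_Tpl_iff]
    exact ⟨0, l, hl, by simp⟩
  obtain ⟨c, l', hl', heq⟩ := mem_Tpl_iff.mp hv
  have hfst := congrArg Prod.fst heq
  have hsnd := congrArg Prod.snd heq
  simp only at hfst hsnd
  have hc : c = 0 := by
    have := congrFun hfst 0
    simpa [phifn_zero] using this.symm
  rw [hsnd]; exact hl'

theorem Tpl_injective : Function.Injective (Tpl (F := F)) := by
  intro p p' h
  exact lline_injective (le_antisymm (Tpl_le_lline h) (Tpl_le_lline h.symm))

/-- the lifted planes -/
noncomputable def liftPl (g : (Fin 3 → F) →ₗ[F] (Fin 7 → F))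
    (D : (Fin 3 → F) →ₗ[F] ((Fin 2 → F) × (Fin 2 → F))) :
    Submodule F ((Fin 7 → F) × ((Fin 2 → F) × (Fin 2 → F))) :=
  LinearMap.range (g.prod D)

theorem mem_liftPl_iff {g : (Fin 3 → F) →ₗ[F] (Fin 7 → F)}
    {D : (Fin 3 → F) →ₗ[F] ((Fin 2 → F) × (Fin 2 → F))} {v} :
    v ∈ liftPl g D ↔ ∃ x, (g x, D x) = v := by
  rw [liftPl]
  constructor
  · rintro ⟨x, rfl⟩; exact ⟨x, rfl⟩
  · rintro ⟨x, rfl⟩; exact ⟨x, rfl⟩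

variable {g g' : (Fin 3 → F) →ₗ[F] (Fin 7 → F)}
variable {D D' : (Fin 3 → F) →ₗ[F] ((Fin 2 → F) × (Fin 2 → F))}

theorem liftPl_finrank (hg : Function.Injective g) : finrank F (liftPl g D) = 3 := by
  rw [liftPl, LinearMap.finrank_range_of_inj, Module.finrank_fin_fun]
  intro x y hxy
  exact hg (congrArg Prod.fst hxy)

theorem liftPl_fst_zero (hg : Function.Injective g) {v} (hv : v ∈ liftPl g D)
    (h1 : v.1 = 0) : v = 0 := by
  obtain ⟨x, rfl⟩ := mem_liftPl_iff.mp hv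
  have : x = 0 := by
    apply hg
    rw [map_zero]
    exact h1
  rw [this]
  simp

theorem liftPl_fst_mem {v} (hv : v ∈ liftPl g D) : v.1 ∈ LinearMap.range g := by
  obtain ⟨x, rfl⟩ := mem_liftPl_iff.mp hv
  exact ⟨x, rfl⟩

theorem liftPl_inf_same (hg : Function.Injective g) :
    finrank F (liftPl g D ⊓ liftPl g D' : Submodule F _)
      ≤ finrank F (LinearMap.ker (D - D')) := by
  have hle : liftPl g D ⊓ liftPl g D' ≤
      (LinearMap.ker (D - D')).map (g.prod D) := by
    rintro v ⟨hv, hv'⟩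
    obtain ⟨x, rfl⟩ := mem_liftPl_iff.mp hv
    obtain ⟨y, hy⟩ := mem_liftPl_iff.mp hv'
    have hxy : y = x := hg (congrArg Prod.fst hy)
    rw [hxy] at hy
    have hDx : D' x = D x := congrArg Prod.snd hy
    refine Submodule.mem_map.mpr ⟨x, ?_, rfl⟩
    rw [LinearMap.mem_ker, LinearMap.sub_apply, hDx, sub_self]
  exact le_trans (Submodule.finrank_mono hle) (Submodule.finrank_map_le _ _)

theorem liftPl_inf_cross [FiniteDimensional F (Fin 7 → F)]
    (hg : Function.Injective g) :
    finrank F (liftPl g D ⊓ liftPl g' D' : Submodule F _)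
      ≤ finrank F (LinearMap.range g ⊓ LinearMap.range g' : Submodule F (Fin 7 → F)) := by
  classical
  set A := liftPl g D ⊓ liftPl g' D' with hA
  set f := (LinearMap.fst F (Fin 7 → F) ((Fin 2 → F) × (Fin 2 → F))) with hf
  have hker : LinearMap.ker (f.domRestrict A) = ⊥ := by
    rw [eq_bot_iff]
    rintro ⟨v, hv⟩ hv0
    rw [LinearMap.mem_ker, LinearMap.domRestrict_apply] at hv0
    have : v = 0 := liftPl_fst_zero hg hv.1 hv0
    simpa [Submodule.mem_bot, Subtype.ext_iff] using this
  have hrange : LinearMap.range (f.domRestrict A) ≤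
      LinearMap.range g ⊓ LinearMap.range g' := by
    rintro y ⟨⟨v, hv⟩, rfl⟩
    exact ⟨liftPl_fst_mem hv.1, liftPl_fst_mem hv.2⟩
  have hrn := LinearMap.finrank_range_add_finrank_ker (f.domRestrict A)
  rw [hker, finrank_bot, add_zero] at hrn
  rw [← hrn]
  exact Submodule.finrank_mono hrange

theorem Tpl_inf_liftPl (hg : Function.Injective g) {p : LIdx F} :
    finrank F (Tpl p ⊓ liftPl g D : Submodule F _) ≤ 1 := by
  classical
  set A := Tpl p ⊓ liftPl g D with hA
  set B := (lline F p).map (LinearMap.inr F (Fin 7 → F) ((Fin 2 → F) × (Fin 2 → F))) with hB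
  have hBT : B ≤ Tpl p := le_sup_left
  have hAB : A ⊓ B = ⊥ := by
    rw [eq_bot_iff]
    rintro v ⟨⟨hv1, hv2⟩, hv3⟩
    obtain ⟨l, _, rfl⟩ := Submodule.mem_map.mp hv3
    have : (LinearMap.inr F (Fin 7 → F) ((Fin 2 → F) × (Fin 2 → F))) l = 0 :=
      liftPl_fst_zero hg hv2 rfl
    simp [this]
  have hsup : A ⊔ B ≤ Tpl p := sup_le inf_le_left hBT
  have hBrk : finrank F B = 2 :=
    (((lline F p).equivMapOfInjective _ LinearMap.inr_injective).symm.finrank_eq).trans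
      (lline_finrank p)
  have hform := Submodule.finrank_sup_add_finrank_inf_eq A B
  rw [hAB, finrank_bot, hBrk] at hform
  have hsuprk : finrank F (A ⊔ B : Submodule F _) ≤ 3 := by
    rw [← Tpl_finrank p]
    exact Submodule.finrank_mono hsup
  omega

theorem Tpl_ne_liftPl (hg : Function.Injective g) {p : LIdx F} : Tpl p ≠ liftPl g D := by
  intro h
  have hline : finrank F (lline F p) = 2 := lline_finrank p
  have : ∃ l : lline F p, (l : (Fin 2 → F) × (Fin 2 → F)) ≠ 0 := by
    by_contra hno
    push_neg at hno
    have : finrank F (lline F p) = 0 := by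
      have : lline F p = ⊥ := by
        rw [eq_bot_iff]; intro x hx
        simpa [Submodule.mem_bot] using hno ⟨x, hx⟩
      rw [this, finrank_bot]
    omega
  obtain ⟨⟨l, hl⟩, hlne⟩ := this
  have hmem : ((0 : Fin 7 → F), l) ∈ Tpl p := by
    rw [mem_Tpl_iff]
    exact ⟨0, l, hl, by simp⟩
  rw [h] at hmem
  have := liftPl_fst_zero hg hmem rfl
  rw [Prod.ext_iff] at this
  exact hlne (by simpa using this.2)

theorem liftPl_map_fst :
    (liftPl g D).map (LinearMap.fst F (Fin 7 → F) ((Fin 2 → F) × (Fin 2 → F)))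
      = LinearMap.range g := by
  apply le_antisymm
  · rintro y ⟨v, hv, rfl⟩
    exact liftPl_fst_mem hv
  · rintro y ⟨x, rfl⟩
    exact ⟨(g x, D x), mem_liftPl_iff.mpr ⟨x, rfl⟩, rfl⟩

end Planes

section Assemble

variable {F : Type*} [Field F]

/-- a chosen parametrization of a 3-dimensional subspace of F^7 -/
noncomputable def gW (W : Submodule F (Fin 7 → F)) : (Fin 3 → F) →ₗ[F] (Fin 7 → F) :=
  if h3 : finrank F W = 3 then
    W.subtype ∘ₗ ((Module.finBasisOfFinrankEq F W h3).equivFun.symm :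
      (Fin 3 → F) ≃ₗ[F] W).toLinearMap
  else 0

theorem gW_injective {W : Submodule F (Fin 7 → F)} (h3 : finrank F W = 3) :
    Function.Injective (gW W) := by
  rw [gW, dif_pos h3]
  intro x y hxy
  simp only [LinearMap.comp_apply] at hxy
  exact (Module.finBasisOfFinrankEq F W h3).equivFun.symm.injective
    (Subtype.ext_iff.mpr hxy)

theorem gW_range {W : Submodule F (Fin 7 → F)} (h3 : finrank F W = 3) :
    LinearMap.range (gW W) = W := by
  rw [gW, dif_pos h3, LinearMap.range_comp, LinearEquiv.range, Submodule.map_top,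
    Submodule.range_subtype]

end Assemble

end CDC13

theorem statement13 (q N : ℕ) (hq : IsPrimePow q)
    (F : Type*) [Field F] [Fintype F] (hF : Fintype.card F = q)
    (h : ∃ C : Finset (Submodule F (Fin 7 → F)),
      C.card = N ∧
      (∀ U ∈ C, Module.finrank F ↥U = 3) ∧
      (∀ U ∈ C, ∀ W ∈ C, U ≠ W → 4 ≤ subspaceDist F U W)) :
    ∃ C : Finset (Submodule F (Fin 11 → F)),
      C.card = q ^ 8 * N + q ^ 4 + q ^ 3 + 2 * q ^ 2 + q + 1 ∧
      (∀ U ∈ C, Module.finrank F ↥U = 3) ∧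
      (∀ U ∈ C, ∀ W ∈ C, U ≠ W → 4 ≤ subspaceDist F U W) := by
  classical
  open Module CDC13 in
  obtain ⟨C7, hC7card, hC73, hC7dist⟩ := h
  have hq2 : 2 ≤ q := hq.two_le
  have hq1 : 1 < Fintype.card F := by rw [hF]; omega
  obtain ⟨ι, hι, hιcard, D, hDinj, hDker⟩ := CDC13.exists_mrd_package hq1
  haveI : Fintype ι := hι
  have hWW : ∀ W ∈ C7, ∀ W' ∈ C7, W ≠ W' →
      finrank F (W ⊓ W' : Submodule F (Fin 7 → F)) ≤ 1 := by
    intro W hW W' hW' hne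
    have hd := hC7dist W hW W' hW' hne
    have h3 := hC73 W hW
    have h3' := hC73 W' hW'
    have hk : finrank F (W ⊓ W' : Submodule F (Fin 7 → F)) ≤ 3 := by
      rw [← h3]; exact Submodule.finrank_mono inf_le_left
    rw [subspaceDist, h3, h3'] at hd
    omega
  set lift : Submodule F (Fin 7 → F) × ι →
      Submodule F ((Fin 7 → F) × ((Fin 2 → F) × (Fin 2 → F))) :=
    fun Wa => CDC13.liftPl (CDC13.gW Wa.1) (D Wa.2) with hlift
  set CD := (C7 ×ˢ (Finset.univ : Finset ι)).image lift with hCD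
  set CE := (Finset.univ : Finset (CDC13.LIdx F)).image (CDC13.Tpl (F := F)) with hCE
  -- membership descriptions
  have hmemCD : ∀ A ∈ CD, ∃ W, W ∈ C7 ∧ ∃ a : ι, A = CDC13.liftPl (CDC13.gW W) (D a) := by
    intro A hA
    rw [hCD, Finset.mem_image] at hA
    obtain ⟨Wa, hWa, rfl⟩ := hA
    rw [Finset.mem_product] at hWa
    exact ⟨Wa.1, hWa.1, Wa.2, rfl⟩
  have hmemCE : ∀ A ∈ CE, ∃ p : CDC13.LIdx F, A = CDC13.Tpl p := by
    intro A hA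
    rw [hCE, Finset.mem_image] at hA
    obtain ⟨p, _, rfl⟩ := hA
    exact ⟨p, rfl⟩
  -- all planes have dimension 3
  have h3all : ∀ A ∈ CD ∪ CE, finrank F A = 3 := by
    intro A hA
    rcases Finset.mem_union.mp hA with hA | hA
    · obtain ⟨W, hW, a, rfl⟩ := hmemCD A hA
      exact CDC13.liftPl_finrank (CDC13.gW_injective (hC73 W hW))
    · obtain ⟨p, rfl⟩ := hmemCE A hA
      exact CDC13.Tpl_finrank p
  -- pairwise intersections have dimension at most 1
  have hpair : ∀ A ∈ CD ∪ CE, ∀ B ∈ CD ∪ CE, A ≠ B →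
      finrank F (A ⊓ B : Submodule F _) ≤ 1 := by
    intro A hA B hB hne
    rcases Finset.mem_union.mp hA with hA | hA <;>
      rcases Finset.mem_union.mp hB with hB | hB
    · -- both lifted
      obtain ⟨W, hW, a, rfl⟩ := hmemCD A hA
      obtain ⟨W', hW', a', rfl⟩ := hmemCD B hB
      by_cases hWeq : W = W'
      · subst hWeq
        have hane : a ≠ a' := by
          intro haa; exact hne (by rw [haa])
        exact le_trans (CDC13.liftPl_inf_same (CDC13.gW_injective (hC73 W hW)))
          (hDker a a' hane)
      · refine le_trans (CDC13.liftPl_inf_cross (CDC13.gW_injective (hC73 W hW))) ?_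
        rw [CDC13.gW_range (hC73 W hW), CDC13.gW_range (hC73 W' hW')]
        exact hWW W hW W' hW' hWeq
    · -- lifted vs extra
      obtain ⟨W, hW, a, rfl⟩ := hmemCD A hA
      obtain ⟨p, rfl⟩ := hmemCE B hB
      rw [inf_comm]
      exact CDC13.Tpl_inf_liftPl (CDC13.gW_injective (hC73 W hW))
    · -- extra vs lifted
      obtain ⟨p, rfl⟩ := hmemCE A hA
      obtain ⟨W, hW, a, rfl⟩ := hmemCD B hB
      exact CDC13.Tpl_inf_liftPl (CDC13.gW_injective (hC73 W hW))
    · -- both extra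
      obtain ⟨p, rfl⟩ := hmemCE A hA
      obtain ⟨p', rfl⟩ := hmemCE B hB
      have hpp : p ≠ p' := by
        intro hpe; exact hne (by rw [hpe])
      exact CDC13.Tpl_inf_le_one hpp
  -- the two families are disjoint
  have hdisj : Disjoint CD CE := by
    rw [Finset.disjoint_left]
    intro A hA hAe
    obtain ⟨W, hW, a, rfl⟩ := hmemCD A hA
    obtain ⟨p, hp⟩ := hmemCE _ hAe
    exact CDC13.Tpl_ne_liftPl (CDC13.gW_injective (hC73 W hW)) hp.symm
  -- cardinality of the lifted family
  have hinjCD : Set.InjOn lift ↑(C7 ×ˢ (Finset.univ : Finset ι)) := by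
    rintro ⟨W, a⟩ hWa ⟨W', a'⟩ hWa' heq
    rw [Finset.mem_coe, Finset.mem_product] at hWa hWa'
    have h3 := hC73 W hWa.1
    have h3' := hC73 W' hWa'.1
    simp only [hlift] at heq
    have hr : LinearMap.range (CDC13.gW W) = LinearMap.range (CDC13.gW W') := by
      rw [← CDC13.liftPl_map_fst (g := CDC13.gW W) (D := D a), heq,
        CDC13.liftPl_map_fst]
    rw [CDC13.gW_range h3, CDC13.gW_range h3'] at hr
    subst hr
    have haa : a = a' := by
      by_contra hane
      have h5 := le_trans (CDC13.liftPl_inf_same (CDC13.gW_injective h3)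
        (D := D a) (D' := D a')) (hDker a a' hane)
      rw [heq, inf_idem] at h5
      rw [CDC13.liftPl_finrank (CDC13.gW_injective h3)] at h5
      omega
    rw [haa]
  have hcardCD : CD.card = N * Fintype.card ι := by
    rw [hCD, Finset.card_image_of_injOn hinjCD, Finset.card_product, Finset.card_univ,
      hC7card]
  have hcardCE : CE.card = q ^ 4 + q ^ 3 + 2 * q ^ 2 + q + 1 := by
    rw [hCE, Finset.card_image_of_injective _ CDC13.Tpl_injective, Finset.card_univ]
    have : Fintype.card (CDC13.LIdx F) =
        ((Fintype.card F) ^ 2) ^ 2 + ((Fintype.card F + 1) * ((Fintype.card F + 1)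
          * Fintype.card F) + 1) := by
      rw [Fintype.card_eq_nat_card]
      simp [CDC13.LIdx, Nat.card_sum, Nat.card_prod, Nat.card_fun, Matrix, Nat.card_eq_fintype_card]
    rw [this, hF]
    ring
  -- the linear equivalence to F^11
  let e1 : ((Fin 2 → F) × (Fin 2 → F)) ≃ₗ[F] (Fin 4 → F) :=
    ((LinearEquiv.funCongrLeft F F finSumFinEquiv).trans
      (LinearEquiv.sumArrowLequivProdArrow (Fin 2) (Fin 2) F F)).symm
  let e2 : ((Fin 7 → F) × (Fin 4 → F)) ≃ₗ[F] ((Fin 7 ⊕ Fin 4) → F) :=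
    (LinearEquiv.sumArrowLequivProdArrow (Fin 7) (Fin 4) F F).symm
  let e3 : ((Fin 7 ⊕ Fin 4) → F) ≃ₗ[F] (Fin 11 → F) :=
    LinearEquiv.funCongrLeft F F ((finCongr (show 11 = 7 + 4 by norm_num)).trans
      (finSumFinEquiv.symm : Fin (7 + 4) ≃ Fin 7 ⊕ Fin 4))
  let eV : ((Fin 7 → F) × ((Fin 2 → F) × (Fin 2 → F))) ≃ₗ[F] (Fin 11 → F) :=
    ((LinearEquiv.refl F (Fin 7 → F)).prodCongr e1).trans (e2.trans e3)
  have hmapinj : Function.Injective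
      (Submodule.map (eV.toLinearMap :
        ((Fin 7 → F) × ((Fin 2 → F) × (Fin 2 → F))) →ₗ[F] (Fin 11 → F))) :=
    Submodule.map_injective_of_injective eV.injective
  refine ⟨(CD ∪ CE).image (Submodule.map eV.toLinearMap), ?_, ?_, ?_⟩
  · have hι8 : Fintype.card ι = q ^ 8 := by
      rw [← hF, ← hιcard]; congr!
    rw [Finset.card_image_of_injective _ hmapinj, Finset.card_union_of_disjoint hdisj,
      hcardCD, hcardCE, hι8]
    ring
  · intro U hU
    rw [Finset.mem_image] at hU
    obtain ⟨A, hA, rfl⟩ := hU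
    rw [LinearEquiv.finrank_map_eq eV A]
    exact h3all A hA
  · intro U hU U' hU' hne
    rw [Finset.mem_image] at hU hU'
    obtain ⟨A, hA, rfl⟩ := hU
    obtain ⟨B, hB, rfl⟩ := hU'
    have hABne : A ≠ B := by
      intro hAB; exact hne (by rw [hAB])
    have hinf : (A.map eV.toLinearMap ⊓ B.map eV.toLinearMap) = (A ⊓ B).map eV.toLinearMap :=
      (Submodule.map_inf eV.toLinearMap eV.injective).symm
    rw [subspaceDist, LinearEquiv.finrank_map_eq eV A, LinearEquiv.finrank_map_eq eV B,
      h3all A hA, h3all B hB, hinf, LinearEquiv.finrank_map_eq eV (A ⊓ B)]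
    have := hpair A hA B hB hABne
    omega
end
end

section
/- Let 1 ≤ k ≤ m ≤ n be integers and d an even integer with 4 ≤ d ≤ 2k. Let 𝒮 ⊆ 𝔽_2^n be a set of binary vectors, each of Hamming weight k and having at most k − d/2 ones among the first m coordinates, such that the Hamming distance between any two distinct elements of 𝒮 is at least d. For each integer j let c_j = #{v ∈ 𝒮 : v has exactly j ones among the first m coordinates}. Then for every integer i with 0 ≤ i ≤ k − d/2 + 1 one has Σ_j binom(j, i)·binom(k − j, k − d/2 + 1 − i)·c_j ≤ binom(m, i)·binom(n − m, k − d/2 + 1 − i), where the sum runs over all j with c_j ≠ 0 and binom denotes the binomial coefficient (equal to 0 when the lower index is negative or exceeds the upper index). -/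
/-- The number of ones of a binary vector `v ∈ 𝔽₂ⁿ` among its first `m` coordinates. -/
def onesAmongFirst {n : ℕ} (m : ℕ) (v : Fin n → Bool) : ℕ :=
  (Finset.univ.filter fun i : Fin n => (i : ℕ) < m ∧ v i = true).card

theorem statement15 (n m k d : ℕ)
    (hk : 1 ≤ k) (hkm : k ≤ m) (hmn : m ≤ n)
    (hd : 4 ≤ d) (hdk : d ≤ 2 * k) (hde : Even d)
    (S : Finset (Fin n → Bool))
    (hwt : ∀ v ∈ S, hammingDist v (fun _ => false) = k)
    (hfirst : ∀ v ∈ S, onesAmongFirst m v ≤ k - d / 2)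
    (hdist : ∀ v ∈ S, ∀ w ∈ S, v ≠ w → d ≤ hammingDist v w)
    (i : ℕ) (hi : i ≤ k - d / 2 + 1) :
    ∑ j ∈ Finset.range (k + 1),
        Nat.choose j i * Nat.choose (k - j) (k - d / 2 + 1 - i) *
          (S.filter fun v => onesAmongFirst m v = j).card ≤
      Nat.choose m i * Nat.choose (n - m) (k - d / 2 + 1 - i) := by
  classical
  open Finset in
  obtain ⟨e, he⟩ := hde
  have hd2 : d / 2 = e := by omega
  set t := k - d / 2 + 1 with ht
  set F : (Fin n → Bool) → Finset (Fin n) :=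
    fun v => Finset.univ.filter fun x => (x : ℕ) < m ∧ v x = true with hF
  set G : (Fin n → Bool) → Finset (Fin n) :=
    fun v => Finset.univ.filter fun x => ¬ (x : ℕ) < m ∧ v x = true with hG
  set Sup : (Fin n → Bool) → Finset (Fin n) :=
    fun v => Finset.univ.filter fun x => v x = true with hSup
  have hFones : ∀ v, (F v).card = onesAmongFirst m v := fun v => rfl
  have hFsub : ∀ v, F v ⊆ Sup v := by
    intro v x hx; simp only [hF, hSup, mem_filter] at *; tauto
  have hGsub : ∀ v, G v ⊆ Sup v := by
    intro v x hx; simp only [hG, hSup, mem_filter] at *; tauto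
  have hSupCard : ∀ v ∈ S, (Sup v).card = k := by
    intro v hv
    have h := hwt v hv
    rwa [show hammingDist v (fun _ => false) = (Sup v).card by simp [hammingDist, hSup]] at h
  have hFG : ∀ v ∈ S, (F v).card + (G v).card = k := by
    intro v hv
    have h := Finset.card_filter_add_card_filter_not
      (s := Sup v) (p := fun x : Fin n => (x : ℕ) < m)
    have h1 : (Sup v).filter (fun x : Fin n => (x : ℕ) < m) = F v := by
      simp only [hF, hSup, Finset.filter_filter]
      congr 1; ext x; tauto
    have h2 : (Sup v).filter (fun x : Fin n => ¬ (x : ℕ) < m) = G v := by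
      simp only [hG, hSup, Finset.filter_filter]
      congr 1; ext x; tauto
    rw [h1, h2, hSupCard v hv] at h
    exact h
  -- key: two codewords sharing a t-element subset of their supports are equal
  have key : ∀ v ∈ S, ∀ w ∈ S, ∀ A B : Finset (Fin n),
      A.card = i → B.card = t - i → A ⊆ F v → B ⊆ G v → A ⊆ F w → B ⊆ G w → v = w := by
    intro v hv w hw A B hA hB hAv hBv hAw hBw
    by_contra hvw
    have hdvw := hdist v hv w hw hvw
    have hABdisj : Disjoint A B := by
      rw [Finset.disjoint_left]
      intro x hxA hxB
      have h1 := hAv hxA; have h2 := hBv hxB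
      simp only [hF, hG, mem_filter] at h1 h2; tauto
    have hABcard : (A ∪ B).card = t := by
      rw [Finset.card_union_of_disjoint hABdisj, hA, hB]; omega
    have hABsub : A ∪ B ⊆ Sup v ∩ Sup w := by
      intro x hx
      rcases Finset.mem_union.1 hx with h | h
      · exact Finset.mem_inter.2 ⟨hFsub v (hAv h), hFsub w (hAw h)⟩
      · exact Finset.mem_inter.2 ⟨hGsub v (hBv h), hGsub w (hBw h)⟩
    have hct : t ≤ (Sup v ∩ Sup w).card := hABcard ▸ Finset.card_le_card hABsub
    -- hamming distance in terms of supports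
    have hdist_eq : hammingDist v w = (Sup v \ Sup w).card + (Sup w \ Sup v).card := by
      rw [← Finset.card_union_of_disjoint (disjoint_sdiff_sdiff)]
      show (Finset.univ.filter fun x => v x ≠ w x).card = _
      congr 1
      ext x
      simp only [Finset.mem_filter, Finset.mem_union, Finset.mem_sdiff, hSup,
        Finset.mem_univ, true_and]
      cases hvx : v x <;> cases hwx : w x <;> simp
    have e1 : (Sup v \ Sup w).card + (Sup v ∩ Sup w).card = (Sup v).card :=
      Finset.card_sdiff_add_card_inter _ _
    have e2 : (Sup w \ Sup v).card + (Sup w ∩ Sup v).card = (Sup w).card :=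
      Finset.card_sdiff_add_card_inter _ _
    rw [Finset.inter_comm] at e2
    have hv' := hSupCard v hv
    have hw' := hSupCard w hw
    omega
  set Q : (Fin n → Bool) → Finset (Finset (Fin n) × Finset (Fin n)) :=
    fun v => (F v).powersetCard i ×ˢ (G v).powersetCard (t - i) with hQ
  have hQmem : ∀ v p, p ∈ Q v ↔
      p.1.card = i ∧ p.2.card = t - i ∧ p.1 ⊆ F v ∧ p.2 ⊆ G v := by
    intro v p
    simp only [hQ, Finset.mem_product, Finset.mem_powersetCard]
    tauto
  have hQcard : ∀ v ∈ S,
      (Q v).card = Nat.choose (onesAmongFirst m v) i *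
        Nat.choose (k - onesAmongFirst m v) (t - i) := by
    intro v hv
    have hGc : (G v).card = k - onesAmongFirst m v := by
      have := hFG v hv; have := hFones v; omega
    simp [hQ, Finset.card_powersetCard, hFones, hGc]
  -- rewrite LHS as sum over S
  have hmaps : ∀ v ∈ S, onesAmongFirst m v ∈ Finset.range (k + 1) := by
    intro v hv
    have := hfirst v hv
    simp only [Finset.mem_range]; omega
  have hsum : ∑ v ∈ S, (Q v).card = ∑ j ∈ Finset.range (k + 1),
      Nat.choose j i * Nat.choose (k - j) (t - i) *
        (S.filter fun v => onesAmongFirst m v = j).card := by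
    rw [Finset.sum_congr rfl hQcard,
      ← Finset.sum_fiberwise_of_maps_to hmaps
        (fun v => Nat.choose (onesAmongFirst m v) i *
          Nat.choose (k - onesAmongFirst m v) (t - i))]
    refine Finset.sum_congr rfl fun j hj => ?_
    calc ∑ v ∈ S.filter (fun v => onesAmongFirst m v = j),
          Nat.choose (onesAmongFirst m v) i * Nat.choose (k - onesAmongFirst m v) (t - i)
        = ∑ _v ∈ S.filter (fun v => onesAmongFirst m v = j),
          Nat.choose j i * Nat.choose (k - j) (t - i) :=
          Finset.sum_congr rfl fun v hv => by rw [(Finset.mem_filter.1 hv).2]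
      _ = _ := by rw [Finset.sum_const, smul_eq_mul, mul_comm]
  rw [← hsum]
  -- the Q v are pairwise disjoint
  have hdisj : (S : Set (Fin n → Bool)).PairwiseDisjoint Q := by
    intro v hv w hw hvw
    simp only [Function.onFun]
    rw [Finset.disjoint_left]
    intro p hpv hpw
    obtain ⟨h1, h2, h3, h4⟩ := (hQmem v p).1 hpv
    obtain ⟨_, _, h5, h6⟩ := (hQmem w p).1 hpw
    exact hvw (key v hv w hw p.1 p.2 h1 h2 h3 h4 h5 h6)
  rw [← Finset.card_biUnion hdisj]
  -- the big union lives in the full product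
  set M : Finset (Fin n) := Finset.univ.filter fun x => (x : ℕ) < m with hM
  set R : Finset (Fin n) := Finset.univ.filter fun x => ¬ (x : ℕ) < m with hR
  have hMcard : M.card = m := by
    have hME : M = (Finset.univ : Finset (Fin m)).map (Fin.castLEEmb hmn) := by
      ext x
      simp only [hM, Finset.mem_filter, Finset.mem_univ, true_and, Finset.mem_map,
        Fin.castLEEmb, Fin.castLE]
      constructor
      · intro h; exact ⟨⟨x, h⟩, by simp [Fin.castLE]⟩
      · rintro ⟨y, hy⟩
        simp only [Function.Embedding.coeFn_mk] at hy
        rw [← hy]; exact y.2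
    simp [hME]
  have hRcard : R.card = n - m := by
    have h := Finset.card_filter_add_card_filter_not
      (s := (Finset.univ : Finset (Fin n))) (p := fun x : Fin n => (x : ℕ) < m)
    simp only [Finset.card_univ, Fintype.card_fin] at h
    have : M.card + R.card = n := h
    omega
  have hsubset : S.biUnion Q ⊆ M.powersetCard i ×ˢ R.powersetCard (t - i) := by
    intro p hp
    obtain ⟨v, hv, hpv⟩ := Finset.mem_biUnion.1 hp
    obtain ⟨h1, h2, h3, h4⟩ := (hQmem v p).1 hpv
    have hFM : F v ⊆ M := fun x hx => by
      simp only [hF, hM, Finset.mem_filter] at *; tauto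
    have hGR : G v ⊆ R := fun x hx => by
      simp only [hG, hR, Finset.mem_filter] at *; tauto
    rw [Finset.mem_product, Finset.mem_powersetCard, Finset.mem_powersetCard]
    exact ⟨⟨h3.trans hFM, h1⟩, h4.trans hGR, h2⟩
  calc (S.biUnion Q).card ≤ (M.powersetCard i ×ˢ R.powersetCard (t - i)).card :=
        Finset.card_le_card hsubset
    _ = Nat.choose m i * Nat.choose (n - m) (t - i) := by
        rw [Finset.card_product, Finset.card_powersetCard, Finset.card_powersetCard,
          hMcard, hRcard]
end

section
/- Let m, n be integers with 1 ≤ m ≤ n and n − m ≥ 4. Let 𝒮 ⊆ 𝔽_2^n be a set of binary vectors, each of Hamming weight 4 and having at most 2 ones among the first m coordinates, such that the Hamming distance between any two distinct elements of 𝒮 is at least 4. Suppose A is an integer such that every set of binary vectors of length n − m, each of Hamming weight 4 and pairwise Hamming distance at least 4, has cardinality at most A. Then #𝒮 ≤ ⌊ m(n−m)(n−m−1)/4 ⌋ + A; more precisely, the number of elements of 𝒮 with at least one 1 among the first m coordinates is at most ⌊ m(n−m)(n−m−1)/4 ⌋, and the number of elements of 𝒮 with no 1 among the first m coordinates is at most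 A. -/
open Finset

def mySupp {n : ℕ} (v : Fin n → Bool) : Finset (Fin n) :=
  Finset.univ.filter (fun i => v i = true)

lemma mem_mySupp {n : ℕ} {v : Fin n → Bool} {i : Fin n} : i ∈ mySupp v ↔ v i = true := by
  simp [mySupp]

lemma hamming_zero_eq_supp {n : ℕ} (v : Fin n → Bool) :
    hammingDist v (fun _ => false) = (mySupp v).card := by
  unfold hammingDist mySupp
  congr 1
  ext i
  simp

lemma filter_ne_eq {n : ℕ} (v w : Fin n → Bool) :
    (Finset.univ.filter fun i => v i ≠ w i) = (mySupp v \ mySupp w) ∪ (mySupp w \ mySupp v) := by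
  ext i
  simp only [mem_filter, mem_univ, true_and, mem_union, mem_sdiff, mem_mySupp]
  cases hv : v i <;> cases hw : w i <;> simp

lemma dist_le_of_inter {n : ℕ} (v w : Fin n → Bool) (hv : (mySupp v).card = 4)
    (hw : (mySupp w).card = 4) (h : 3 ≤ (mySupp v ∩ mySupp w).card) :
    hammingDist v w ≤ 2 := by
  have h1 : (mySupp v \ mySupp w).card + (mySupp v ∩ mySupp w).card = (mySupp v).card :=
    Finset.card_sdiff_add_card_inter _ _
  have h2 : (mySupp w \ mySupp v).card + (mySupp w ∩ mySupp v).card = (mySupp w).card :=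
    Finset.card_sdiff_add_card_inter _ _
  rw [Finset.inter_comm] at h2
  have := Finset.card_union_le (mySupp v \ mySupp w) (mySupp w \ mySupp v)
  unfold hammingDist
  rw [show ({i | v i ≠ w i} : Finset (Fin n)) = (Finset.univ.filter fun i => v i ≠ w i) from rfl,
    filter_ne_eq]
  omega

theorem statement16 (n m : ℕ) (hm : 1 ≤ m) (hmn : m ≤ n) (h4 : 4 ≤ n - m)
    (S : Finset (Fin n → Bool))
    (hwt : ∀ v ∈ S, hammingDist v (fun _ => false) = 4)
    (hfirst : ∀ v ∈ S, onesAmongFirst m v ≤ 2)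
    (hdist : ∀ v ∈ S, ∀ w ∈ S, v ≠ w → 4 ≤ hammingDist v w)
    (A : ℕ)
    (hA : ∀ T : Finset (Fin (n - m) → Bool),
      (∀ v ∈ T, hammingDist v (fun _ => false) = 4) →
      (∀ v ∈ T, ∀ w ∈ T, v ≠ w → 4 ≤ hammingDist v w) →
      T.card ≤ A) :
    S.card ≤ m * (n - m) * (n - m - 1) / 4 + A ∧
    (S.filter fun v => 1 ≤ onesAmongFirst m v).card ≤ m * (n - m) * (n - m - 1) / 4 ∧
    (S.filter fun v => onesAmongFirst m v = 0).card ≤ A := by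
  have hsupp4 : ∀ v ∈ S, (mySupp v).card = 4 := fun v hv => by
    rw [← hamming_zero_eq_supp]; exact hwt v hv
  -- Part S₀ : vectors with no ones among first m coordinates
  set S0 := S.filter (fun v => onesAmongFirst m v = 0) with hS0
  set S1 := S.filter (fun v => 1 ≤ onesAmongFirst m v) with hS1
  have hzero : ∀ v ∈ S0, ∀ i : Fin n, (i : ℕ) < m → v i = false := by
    intro v hv i hi
    rw [hS0, mem_filter] at hv
    have := hv.2
    unfold onesAmongFirst at this
    rw [Finset.card_eq_zero, Finset.filter_eq_empty_iff] at this
    have hvi := this (Finset.mem_univ i)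
    by_contra hfalse
    exact hvi ⟨hi, by simpa using hfalse⟩
  -- restriction map
  set r : (Fin n → Bool) → (Fin (n - m) → Bool) :=
    fun v i => v ⟨m + i.1, by have := i.isLt; omega⟩ with hr
  have hrdist : ∀ v w : Fin n → Bool, (∀ i : Fin n, (i : ℕ) < m → v i = w i) →
      hammingDist (r v) (r w) = hammingDist v w := by
    intro v w hvw
    unfold hammingDist
    apply Finset.card_bij (fun (i : Fin (n - m)) _ => (⟨m + i.1, by have := i.isLt; omega⟩ : Fin n))
    · intro a ha
      simp only [mem_filter, mem_univ, true_and] at ha ⊢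
      exact ha
    · intro a _ b _ hab
      have : m + a.1 = m + b.1 := congrArg Fin.val hab
      exact Fin.ext (by omega)
    · intro j hj
      simp only [mem_filter, mem_univ, true_and] at hj
      have hjm : m ≤ (j : ℕ) := by
        by_contra hc
        exact hj (hvw j (by omega))
      have hjlt : j.1 - m < n - m := by have := j.isLt; omega
      have hidx : m + (j.1 - m) = j.1 := by omega
      refine ⟨⟨j.1 - m, hjlt⟩, ?_, Fin.ext (by simp [hidx])⟩
      simp only [mem_filter, mem_univ, true_and, hr]
      intro heq
      apply hj
      calc v j = v ⟨m + (j.1 - m), by omega⟩ := by congr 1; exact Fin.ext (by simp [hidx])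
      _ = w ⟨m + (j.1 - m), by omega⟩ := heq
      _ = w j := by congr 1; exact Fin.ext (by simp [hidx])
  have hS0card : S0.card ≤ A := by
    have hinj : Set.InjOn r S0 := by
      intro v hv w hw hvw
      apply eq_of_hammingDist_eq_zero
      rw [← hrdist v w (fun i hi => by rw [hzero v hv i hi, hzero w hw i hi]), hvw,
        hammingDist_self]
    rw [← Finset.card_image_of_injOn hinj]
    apply hA
    · intro x hx
      obtain ⟨v, hv, rfl⟩ := Finset.mem_image.1 hx
      have : r (fun _ => false) = (fun _ => false) := rfl
      rw [← this, hrdist v _ (fun i hi => hzero v hv i hi)]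
      exact hwt v (Finset.mem_of_mem_filter v hv)
    · intro x hx y hy hxy
      obtain ⟨v, hv, rfl⟩ := Finset.mem_image.1 hx
      obtain ⟨w, hw, rfl⟩ := Finset.mem_image.1 hy
      rw [hrdist v w (fun i hi => by rw [hzero v hv i hi, hzero w hw i hi])]
      exact hdist v (Finset.mem_of_mem_filter v hv) w (Finset.mem_of_mem_filter w hw)
        (fun h => hxy (by rw [h]))
  -- Part S₁ : double counting
  set FltM : Finset (Fin n) := Finset.univ.filter (fun i => (i : ℕ) < m) with hFltM
  set FgeM : Finset (Fin n) := Finset.univ.filter (fun i => m ≤ (i : ℕ)) with hFgeM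
  have hFltMcard : FltM.card = m := by
    rw [hFltM]
    rw [show Finset.univ.filter (fun i : Fin n => (i : ℕ) < m)
        = (Finset.univ : Finset (Fin m)).image (Fin.castLE hmn) by
      ext i
      simp only [mem_filter, mem_univ, true_and, mem_image]
      constructor
      · intro hi; exact ⟨⟨i.1, hi⟩, rfl⟩
      · rintro ⟨j, rfl⟩; exact j.isLt]
    rw [Finset.card_image_of_injective _ (Fin.castLE_injective hmn)]
    simp
  have hFgeMcard : FgeM.card = n - m := by
    have h1 : FltM.card + FgeM.card = n := by
      rw [hFltM, hFgeM]
      rw [show (Finset.univ.filter (fun i : Fin n => m ≤ (i : ℕ)))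
          = Finset.univ.filter (fun i : Fin n => ¬ ((i : ℕ) < m)) by simp [not_lt]]
      rw [Finset.card_filter_add_card_filter_not]
      simp
    omega
  set Amb : Finset (Fin n × Finset (Fin n)) := FltM ×ˢ FgeM.powersetCard 2 with hAmb
  have hAmbcard : Amb.card = m * ((n - m) * (n - m - 1) / 2) := by
    rw [hAmb, Finset.card_product, Finset.card_powersetCard, hFltMcard, hFgeMcard,
      Nat.choose_two_right]
  set P : (Fin n → Bool) → Finset (Fin n × Finset (Fin n)) :=
    fun v => Amb.filter (fun p => v p.1 = true ∧ p.2 ⊆ mySupp v) with hP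
  -- P v ⊆ Amb, and for distinct codewords P v are disjoint
  have hPdisj : ∀ v ∈ S, ∀ w ∈ S, v ≠ w → Disjoint (P v) (P w) := by
    intro v hv w hw hvw
    rw [Finset.disjoint_left]
    rintro ⟨i, e⟩ hpv hpw
    rw [hP, Finset.mem_filter] at hpv hpw
    obtain ⟨hmem, hvi, hev⟩ := hpv
    obtain ⟨-, hwi, hew⟩ := hpw
    simp only [hAmb, Finset.mem_product, Finset.mem_powersetCard, Prod.fst, Prod.snd,
      hFltM, hFgeM, Finset.mem_filter, Finset.mem_univ, true_and] at hmem
    obtain ⟨hiFlt, heF, hecard⟩ := hmem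
    have hie : i ∉ e := by
      intro hie
      have h := heF hie
      simp only [hFgeM, Finset.mem_filter, Finset.mem_univ, true_and] at h
      omega
    have hsub : insert i e ⊆ mySupp v ∩ mySupp w := by
      intro j hj
      rw [Finset.mem_insert] at hj
      rcases hj with rfl | hj
      · exact Finset.mem_inter.2 ⟨mem_mySupp.2 hvi, mem_mySupp.2 hwi⟩
      · exact Finset.mem_inter.2 ⟨hev hj, hew hj⟩
    have h3 : 3 ≤ (mySupp v ∩ mySupp w).card := by
      have := Finset.card_le_card hsub
      rw [Finset.card_insert_of_notMem hie, hecard] at this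
      omega
    have := dist_le_of_inter v w (hsupp4 v hv) (hsupp4 w hw) h3
    have := hdist v hv w hw hvw
    omega
  -- each codeword in S₁ contributes at least 2 pairs
  have hPge2 : ∀ v ∈ S1, 2 ≤ (P v).card := by
    intro v hv
    rw [hS1, Finset.mem_filter] at hv
    obtain ⟨hvS, hv1⟩ := hv
    set F : Finset (Fin n) := (mySupp v).filter (fun i : Fin n => (i : ℕ) < m) with hF
    set B : Finset (Fin n) := (mySupp v).filter (fun i : Fin n => m ≤ (i : ℕ)) with hB
    have hFcard : F.card = onesAmongFirst m v := by
      rw [hF, onesAmongFirst, mySupp, Finset.filter_filter]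
      congr 1
      ext i
      simp [and_comm]
    have hFB : F.card + B.card = 4 := by
      rw [hF, hB]
      rw [show ((mySupp v).filter (fun i : Fin n => m ≤ (i : ℕ)))
          = (mySupp v).filter (fun i : Fin n => ¬ ((i : ℕ) < m)) by simp [not_lt]]
      rw [Finset.card_filter_add_card_filter_not]
      exact hsupp4 v hvS
    have hPeq : P v = F ×ˢ B.powersetCard 2 := by
      rw [hP]
      ext ⟨i, e⟩
      simp only [Finset.mem_filter, Finset.mem_product, Finset.mem_powersetCard,
        hAmb, hF, hB, hFltM, hFgeM, Finset.mem_filter, Finset.mem_univ, true_and,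
        mem_mySupp, Finset.subset_iff]
      constructor
      · rintro ⟨⟨him, he, hec⟩, hvi, hev⟩
        exact ⟨⟨hvi, him⟩, fun j hj => ⟨hev hj, he hj⟩, hec⟩
      · rintro ⟨⟨hvi, him⟩, he, hec⟩
        exact ⟨⟨him, fun j hj => (he hj).2, hec⟩, hvi, fun j hj => (he hj).1⟩
    rw [hPeq, Finset.card_product, Finset.card_powersetCard]
    have ha2 : onesAmongFirst m v ≤ 2 := hfirst v hvS
    have hBcard : B.card = 4 - F.card := by omega
    rw [hBcard, hFcard]
    set a := onesAmongFirst m v with ha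
    interval_cases a <;> simp [Nat.choose]
  -- double counting
  have hsum : 2 * S1.card ≤ Amb.card := by
    have hbi : (S1.biUnion P).card = ∑ v ∈ S1, (P v).card := by
      apply Finset.card_biUnion
      intro v hv w hw hvw
      exact hPdisj v (Finset.mem_of_mem_filter v hv) w (Finset.mem_of_mem_filter w hw) hvw
    have hsub : S1.biUnion P ⊆ Amb := by
      intro p hp
      rw [Finset.mem_biUnion] at hp
      obtain ⟨v, -, hpv⟩ := hp
      exact Finset.mem_of_mem_filter p hpv
    have h1 : ∑ v ∈ S1, (P v).card ≤ Amb.card := hbi ▸ Finset.card_le_card hsub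
    have h2 : S1.card * 2 ≤ ∑ v ∈ S1, (P v).card := by
      calc S1.card * 2 = ∑ _v ∈ S1, 2 := by rw [Finset.sum_const, smul_eq_mul]
      _ ≤ ∑ v ∈ S1, (P v).card := Finset.sum_le_sum hPge2
    omega
  have hS1card : S1.card ≤ m * (n - m) * (n - m - 1) / 4 := by
    obtain ⟨k, hk⟩ : ∃ k, n - m = k + 1 := ⟨n - m - 1, by omega⟩
    have hdvd : 2 ∣ (n - m) * (n - m - 1) := by
      rw [hk]
      simpa [Nat.mul_comm] using (Nat.even_mul_succ_self k).two_dvd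
    rw [hAmbcard, ← Nat.mul_div_assoc m hdvd] at hsum
    have heq : m * ((n - m) * (n - m - 1)) = m * (n - m) * (n - m - 1) := by ring
    rw [heq] at hsum
    set M := m * (n - m) * (n - m - 1) with hM
    omega
  refine ⟨?_, hS1card, hS0card⟩
  have hpart : S1.card + S0.card = S.card := by
    rw [hS1, hS0]
    rw [show (S.filter (fun v => onesAmongFirst m v = 0))
        = S.filter (fun v => ¬ (1 ≤ onesAmongFirst m v)) by simp [Nat.lt_one_iff]]
    exact Finset.card_filter_add_card_filter_not _
  omega
end

section
/- (Improved linkage construction.) Let q be a prime power, d an even integer with 2 ≤ d ≤ 2k, and Δ an integer with k ≤ Δ ≤ n − k. If there exist an (n−Δ, N_1, d, k)_q constant dimension code and a (Δ + k − d/2, N_2, d, k)_q constant dimension code, then there exists an (n, q^{Δ(k−d/2+1)}·N_1 + N_2, d, k)_q constant dimension code; that is, A_q(n,d;k) ≥ q^{Δ(k−d/2+1)}·A_q(n−Δ,d;k) + A_q(Δ+k−d/2,d;k). -/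
open Polynomial

section ExtField
variable (F : Type*) [Field F] [Fintype F] (m : ℕ)

abbrev MyExt : Type _ := SplittingField (X ^ (Fintype.card F ^ m) - X : F[X])

noncomputable instance : Field (MyExt F m) := inferInstanceAs (Field (SplittingField _))
noncomputable instance : Algebra F (MyExt F m) := inferInstanceAs (Algebra F (SplittingField _))
instance : FiniteDimensional F (MyExt F m) := by dsimp only [MyExt]; infer_instance
instance : Finite (MyExt F m) := Module.finite_of_finite F

theorem myext_finrank (h : m ≠ 0) : Module.finrank F (MyExt F m) = m := by
  classical
  haveI : Fintype (MyExt F m) := Fintype.ofFinite _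
  set q := Fintype.card F with hq
  set p := ringChar F with hp'
  haveI hfp : Fact p.Prime := ⟨CharP.char_is_prime F p⟩
  haveI : CharP (MyExt F m) p := charP_of_injective_algebraMap (algebraMap F (MyExt F m)).injective p
  obtain ⟨e, _, hqe⟩ := FiniteField.card F p
  have hqm : q ^ m = p ^ (e * m) := by rw [hq, hqe, pow_mul]
  have hpq : p ∣ q ^ m := by
    rw [hq, hqe]
    exact dvd_pow (dvd_pow_self p e.ne_zero) h
  have hq1 : 1 < q := Fintype.one_lt_card
  set g_poly := (X ^ q ^ m - X : F[X]) with hg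
  have aux : g_poly ≠ 0 := FiniteField.X_pow_card_pow_sub_X_ne_zero _ h hq1
  have key : Fintype.card (g_poly.rootSet (MyExt F m)) = g_poly.natDegree :=
    card_rootSet_eq_natDegree (galois_poly_separable p _ hpq)
      (SplittingField.splits g_poly)
  have nat_degree_eq : g_poly.natDegree = q ^ m :=
    FiniteField.X_pow_card_pow_sub_X_natDegree_eq _ h hq1
  rw [nat_degree_eq] at key
  suffices g_poly.rootSet (MyExt F m) = Set.univ by
    simp_rw [this, ← Fintype.ofEquiv_card (Equiv.Set.univ _)] at key
    rw [@Module.card_eq_pow_finrank F _ _ _ _ _ (_)] at key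
    exact Nat.pow_right_injective hq1 key
  rw [Set.eq_univ_iff_forall]
  suffices ∀ (x) (_ : x ∈ (⊤ : Subalgebra F (MyExt F m))),
      x ∈ g_poly.rootSet (MyExt F m) by simpa using this
  have hsf : IsSplittingField F (MyExt F m) g_poly := Polynomial.IsSplittingField.splittingField _
  rw [← SplittingField.adjoin_rootSet]
  simp_rw [Algebra.mem_adjoin_iff]
  intro x hx
  refine Subring.closure_induction ?_ ?_ ?_ ?_ ?_ ?_ hx <;> simp_rw [mem_rootSet_of_ne aux]
  · rintro x (⟨r, rfl⟩ | hx)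
    · simp only [g_poly, map_sub, map_pow, aeval_X]
      rw [← map_pow, FiniteField.pow_card_pow, sub_self]
    · rwa [mem_rootSet_of_ne aux] at hx
  · rw [← coeff_zero_eq_aeval_zero']
    simp only [g_poly, coeff_X_pow, coeff_X_zero, sub_zero, _root_.map_eq_zero, ite_eq_right_iff,
      one_ne_zero, coeff_sub]
    intro hn
    exact absurd (pow_eq_zero_iff (by positivity) |>.mp hn.symm) (by omega)
  · simp [g_poly]
  · simp only [g_poly, aeval_X_pow, aeval_X, map_sub, sub_eq_zero]
    intro x y _ _ hx hy
    simp only [hqm] at hx hy ⊢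
    rw [add_pow_char_pow, hx, hy]
  · intro x _ hx
    simp only [g_poly, sub_eq_zero, aeval_X_pow, aeval_X, map_sub, sub_neg_eq_add] at *
    simp only [hqm] at hx ⊢
    rw [neg_pow, hx, neg_one_pow_char_pow]
    simp
  · simp only [g_poly, aeval_X_pow, aeval_X, map_sub, mul_pow, sub_eq_zero]
    intro x y _ _ hx hy
    rw [hx, hy]
end ExtField

section Frob
variable (F : Type*) [Field F] [Fintype F] {K : Type*} [Field K] [Algebra F K]

/-- `x ↦ x ^ (q ^ j)` as an `F`-linear map on a finite extension. -/
noncomputable def frobPow (j : ℕ) : K →ₗ[F] K where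
  toFun x := x ^ (Fintype.card F ^ j)
  map_add' x y := by
    set p := ringChar F with hp'
    haveI hfp : Fact p.Prime := ⟨CharP.char_is_prime F p⟩
    haveI : CharP K p := charP_of_injective_algebraMap (algebraMap F K).injective p
    obtain ⟨e, _, hqe⟩ := FiniteField.card F p
    simp only [hqe, ← pow_mul]
    exact add_pow_char_pow x y (p := p) _
  map_smul' c x := by
    simp only [Algebra.smul_def, RingHom.id_apply, mul_pow, ← map_pow,
      FiniteField.pow_card_pow]

@[simp] lemma frobPow_apply (j : ℕ) (x : K) :
    frobPow F j x = x ^ (Fintype.card F ^ j) := rfl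

/-- Gabidulin-style linearized map `x ↦ ∑ j, a j * x ^ (q ^ j)`. -/
noncomputable def linzd {r : ℕ} (a : Fin r → K) : K →ₗ[F] K :=
  ∑ j : Fin r, (LinearMap.mulLeft F (a j)).comp (frobPow F (j : ℕ))

lemma linzd_apply {r : ℕ} (a : Fin r → K) (x : K) :
    linzd F a x = ∑ j : Fin r, a j * x ^ (Fintype.card F ^ (j : ℕ)) := by
  simp [linzd]

lemma linzd_sub {r : ℕ} (a b : Fin r → K) :
    linzd F a - linzd F b = linzd F (a - b) := by
  simp only [linzd, ← Finset.sum_sub_distrib]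
  congr 1; ext j x
  simp [LinearMap.mulLeft, sub_mul]

lemma linzd_ker_finrank [FiniteDimensional F K] {r : ℕ} (a : Fin r → K) (ha : a ≠ 0) :
    Module.finrank F (LinearMap.ker (linzd F a)) ≤ r - 1 := by
  classical
  haveI : Finite K := Module.finite_of_finite F
  haveI : Fintype K := Fintype.ofFinite _
  set q := Fintype.card F with hq
  have hq1 : 1 < q := Fintype.one_lt_card
  set P : K[X] := ∑ j : Fin r, C (a j) * X ^ (q ^ (j : ℕ)) with hP
  obtain ⟨j₀, hj₀⟩ : ∃ j, a j ≠ 0 := by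
    by_contra hc; push_neg at hc; exact ha (funext fun j => hc j)
  have hcoeff : P.coeff (q ^ (j₀ : ℕ)) = a j₀ := by
    rw [hP, finset_sum_coeff]
    rw [Finset.sum_eq_single j₀]
    · simp
    · intro j _ hj
      have : q ^ (j : ℕ) ≠ q ^ (j₀ : ℕ) := fun hEq =>
        hj (Fin.ext (Nat.pow_right_injective hq1 hEq))
      simp only [coeff_C_mul, coeff_X_pow]
      rw [if_neg (Ne.symm this)]
      simp
    · simp
  have hP0 : P ≠ 0 := fun hc => hj₀ (by rw [← hcoeff, hc, coeff_zero])
  have hdeg : P.natDegree ≤ q ^ (r - 1) := by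
    refine natDegree_sum_le_of_forall_le _ _ fun j _ => ?_
    calc (C (a j) * X ^ (q ^ (j : ℕ))).natDegree ≤ q ^ (j : ℕ) := by
          apply natDegree_C_mul_le _ _ |>.trans; simp
      _ ≤ q ^ (r - 1) :=
          Nat.pow_le_pow_right (le_of_lt hq1) (Nat.le_sub_one_of_lt j.isLt)
  have hroot : ∀ x ∈ LinearMap.ker (linzd F a), x ∈ P.roots.toFinset := by
    intro x hx
    rw [LinearMap.mem_ker] at hx
    rw [Multiset.mem_toFinset, mem_roots hP0]
    rw [IsRoot.def, hP]
    have : P.eval x = linzd F a x := by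
      rw [hP, linzd_apply]; simp [eval_finset_sum, hq]
    rw [← hP, this, hx]
  have hcard : Fintype.card (LinearMap.ker (linzd F a)) ≤ q ^ (r - 1) := by
    have inj : Function.Injective
        (fun x : LinearMap.ker (linzd F a) => (⟨x.1, hroot x.1 x.2⟩ : P.roots.toFinset)) :=
      fun x y hxy => Subtype.ext (by simpa using congrArg Subtype.val hxy)
    calc Fintype.card (LinearMap.ker (linzd F a)) ≤ Fintype.card P.roots.toFinset :=
          Fintype.card_le_of_injective _ inj
      _ = P.roots.toFinset.card := Fintype.card_coe _
      _ ≤ P.roots.card := P.roots.toFinset_card_le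
      _ ≤ P.natDegree := (card_roots' P)
      _ ≤ q ^ (r - 1) := hdeg
  have := Module.card_eq_pow_finrank (K := F) (V := LinearMap.ker (linzd F a))
  rw [this, hq] at hcard
  exact (Nat.pow_le_pow_iff_right hq1).mp hcard
end Frob

open Module Submodule

section Helpers
variable {F : Type*} [Field F] {V W : Type*} [AddCommGroup V] [Module F V]
  [AddCommGroup W] [Module F W]

lemma finrank_map_eq_of_injOn (f : V →ₗ[F] W) (T : Submodule F V)
    (h : ∀ x ∈ T, f x = 0 → x = 0) :
    finrank F (Submodule.map f T) = finrank F T := by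
  have hinj : Function.Injective (f.comp T.subtype) := by
    rw [← LinearMap.ker_eq_bot, LinearMap.ker_eq_bot']
    intro x hx
    exact Subtype.ext (h x.1 x.2 hx)
  have := LinearMap.finrank_range_of_inj hinj
  rwa [LinearMap.range_comp, Submodule.range_subtype] at this

lemma finrank_le_of_injOn [FiniteDimensional F W] (f : V →ₗ[F] W) (T : Submodule F V)
    (X : Submodule F W) (h : ∀ x ∈ T, f x = 0 → x = 0) (hle : Submodule.map f T ≤ X) :
    finrank F ↥T ≤ finrank F ↥X :=
  (finrank_map_eq_of_injOn f T h) ▸ Submodule.finrank_mono hle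

lemma exists_inj_linmap (F : Type*) [Field F] {a b : ℕ} (hab : a ≤ b) :
    ∃ f : (Fin a → F) →ₗ[F] (Fin b → F), Function.Injective f := by
  rcases Nat.eq_zero_or_pos a with rfl | ha
  · exact ⟨0, fun x y _ => Subsingleton.elim x y⟩
  · set u : Fin b → Fin a := fun i => if h' : (i : ℕ) < a then ⟨i, h'⟩ else ⟨0, ha⟩ with hu
    have hsurj : Function.Surjective u := fun j =>
      ⟨⟨j, lt_of_lt_of_le j.isLt hab⟩, by simp [hu, j.isLt]⟩
    exact ⟨LinearMap.funLeft F F u, LinearMap.funLeft_injective_of_surjective F F u hsurj⟩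

lemma subspaceDist_comm {F : Type*} [Field F] {n : ℕ} (U W : Submodule F (Fin n → F)) :
    subspaceDist F U W = subspaceDist F W U := by
  unfold subspaceDist
  rw [inf_comm, add_comm]
end Helpers

theorem statement17 (q n k d Δ N₁ N₂ : ℕ) (hq : IsPrimePow q)
    (hd : 2 ≤ d) (hdk : d ≤ 2 * k) (hde : Even d)
    (hkΔ : k ≤ Δ) (hΔn : Δ ≤ n - k)
    (F : Type*) [Field F] [Fintype F] (hF : Fintype.card F = q)
    (h₁ : ∃ C : Finset (Submodule F (Fin (n - Δ) → F)),
      C.card = N₁ ∧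
      (∀ U ∈ C, Module.finrank F ↥U = k) ∧
      (∀ U ∈ C, ∀ W ∈ C, U ≠ W → d ≤ subspaceDist F U W))
    (h₂ : ∃ C : Finset (Submodule F (Fin (Δ + k - d / 2) → F)),
      C.card = N₂ ∧
      (∀ U ∈ C, Module.finrank F ↥U = k) ∧
      (∀ U ∈ C, ∀ W ∈ C, U ≠ W → d ≤ subspaceDist F U W)) :
    ∃ C : Finset (Submodule F (Fin n → F)),
      C.card = q ^ (Δ * (k - d / 2 + 1)) * N₁ + N₂ ∧
      (∀ U ∈ C, Module.finrank F ↥U = k) ∧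
      (∀ U ∈ C, ∀ W ∈ C, U ≠ W → d ≤ subspaceDist F U W) := by
  classical
  obtain ⟨C₁, hC₁card, hC₁dim, hC₁dist⟩ := h₁
  obtain ⟨C₂, hC₂card, hC₂dim, hC₂dist⟩ := h₂
  obtain ⟨t, ht⟩ := hde
  have hδ2 : d = 2 * (d / 2) := by omega
  have hδ1 : 1 ≤ d / 2 := by omega
  have hδk : d / 2 ≤ k := by omega
  have hkn : Δ + k ≤ n := by omega
  have hkm : k ≤ n - Δ := by omega
  have hmΔ : (n - Δ) + Δ = n := by omega
  have hsplit2 : Δ + k - d / 2 = (k - d / 2) + Δ := by omega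
  -- the degree-Δ extension field
  haveI : Fintype (MyExt F Δ) := Fintype.ofFinite _
  have hKrank : Module.finrank F (MyExt F Δ) = Δ := myext_finrank F Δ (by omega)
  have hq1 : 1 < q := by rw [← hF]; exact Fintype.one_lt_card
  have hKcard : Fintype.card (MyExt F Δ) = q ^ Δ := by
    rw [card_eq_pow_finrank (K := F) (V := MyExt F Δ), hKrank, hF]
  obtain ⟨gK⟩ : Nonempty ((Fin Δ → F) ≃ₗ[F] MyExt F Δ) :=
    FiniteDimensional.nonempty_linearEquiv_of_finrank_eq
      (by rw [Module.finrank_fin_fun, hKrank])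
  obtain ⟨j₁, hj₁⟩ := exists_inj_linmap F hkΔ
  obtain ⟨j₂, hj₂⟩ := exists_inj_linmap F (show k - d / 2 ≤ n - Δ by omega)
  -- choose, for each k-dim subspace U, a linear map to K injective on U
  have hτ0 : ∀ U : Submodule F (Fin (n - Δ) → F),
      ∃ τ : (Fin (n - Δ) → F) →ₗ[F] MyExt F Δ,
      Module.finrank F ↥U = k → ∀ x ∈ U, τ x = 0 → x = 0 := by
    intro U
    by_cases hU : Module.finrank F ↥U = k
    · obtain ⟨bU⟩ : Nonempty (↥U ≃ₗ[F] (Fin k → F)) :=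
        FiniteDimensional.nonempty_linearEquiv_of_finrank_eq
          (by rw [hU, Module.finrank_fin_fun])
      obtain ⟨U', hU'⟩ := Submodule.exists_isCompl U
      refine ⟨(gK.toLinearMap ∘ₗ j₁) ∘ₗ (bU.toLinearMap ∘ₗ (U.linearProjOfIsCompl U' hU')),
        fun _ x hx h0 => ?_⟩
      have hproj : U.linearProjOfIsCompl U' hU' x = ⟨x, hx⟩ :=
        Submodule.linearProjOfIsCompl_apply_left hU' ⟨x, hx⟩
      simp only [LinearMap.comp_apply, hproj, LinearEquiv.coe_coe] at h0
      have h1 : j₁ (bU ⟨x, hx⟩) = 0 := by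
        apply gK.injective; rw [h0, map_zero]
      have h2 : bU ⟨x, hx⟩ = 0 := by
        apply hj₁; rw [h1, map_zero]
      have h3 : (⟨x, hx⟩ : ↥U) = 0 := by
        exact (LinearEquiv.map_eq_zero_iff bU).mp h2
      exact congrArg Subtype.val h3
    · exact ⟨0, fun h => absurd h hU⟩
  choose τ hτ using hτ0
  -- the lifted subspaces (graphs) in the product space
  set P := (Fin (n - Δ) → F) × (Fin Δ → F) with hP
  set ψ : Submodule F (Fin (n - Δ) → F) → (Fin (k - d / 2 + 1) → MyExt F Δ) →
      ((Fin (n - Δ) → F) →ₗ[F] (Fin Δ → F)) :=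
    fun U a => gK.symm.toLinearMap ∘ₗ (linzd F a) ∘ₗ τ U with hψ
  set Γ : Submodule F (Fin (n - Δ) → F) → (Fin (k - d / 2 + 1) → MyExt F Δ) →
      Submodule F P :=
    fun U a => Submodule.map (LinearMap.prod LinearMap.id (ψ U a)) U with hΓ
  set e₂ : (Fin (Δ + k - d / 2) → F) ≃ₗ[F] (Fin (k - d / 2) → F) × (Fin Δ → F) :=
    (LinearEquiv.funCongrLeft F F (finSumFinEquiv.trans (finCongr hsplit2.symm))).trans
      (LinearEquiv.sumArrowLequivProdArrow _ _ F F) with he₂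
  set ι : (Fin (Δ + k - d / 2) → F) →ₗ[F] P :=
    (j₂.prodMap LinearMap.id) ∘ₗ e₂.toLinearMap with hι
  have hιinj : Function.Injective ι := by
    intro x y hxy
    apply e₂.injective
    simp only [hι, LinearMap.comp_apply] at hxy
    have h1 := congrArg Prod.fst hxy
    have h2 := congrArg Prod.snd hxy
    change j₂ (e₂ x).1 = j₂ (e₂ y).1 at h1
    change (e₂ x).2 = (e₂ y).2 at h2
    exact Prod.ext (hj₂ h1) h2
  set E : P ≃ₗ[F] (Fin n → F) :=
    ((LinearEquiv.funCongrLeft F F (finSumFinEquiv.trans (finCongr hmΔ))).trans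
      (LinearEquiv.sumArrowLequivProdArrow _ _ F F)).symm with hE
  have hEdist : ∀ A B : Submodule F P,
      subspaceDist F (Submodule.map E.toLinearMap A) (Submodule.map E.toLinearMap B) =
        finrank F ↥A + finrank F ↥B - 2 * finrank F ↥(A ⊓ B) := by
    intro A B
    unfold subspaceDist
    rw [← Submodule.map_inf E.toLinearMap E.injective,
      LinearEquiv.finrank_map_eq, LinearEquiv.finrank_map_eq, LinearEquiv.finrank_map_eq]
  have hEinj : Function.Injective (Submodule.map E.toLinearMap :
      Submodule F P → Submodule F (Fin n → F)) :=
    Submodule.map_injective_of_injective E.injective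
  -- basic facts about the graphs
  have hΓfst : ∀ U a, Submodule.map (LinearMap.fst F _ _) (Γ U a) = U := by
    intro U a
    rw [hΓ]
    rw [← Submodule.map_comp, LinearMap.fst_prod, Submodule.map_id]
  have hΓzero : ∀ U a, ∀ z ∈ Γ U a, z.1 = 0 → z = 0 := by
    intro U a z hz h1
    rw [hΓ, Submodule.mem_map] at hz
    obtain ⟨x, hxU, rfl⟩ := hz
    change x = 0 at h1
    subst h1
    simp [map_zero]
  have hΓrank : ∀ (U : Submodule F (Fin (n - Δ) → F)) a, Module.finrank F ↥U = k → Module.finrank F ↥(Γ U a) = k := by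
    intro U a hU
    rw [hΓ]
    rw [finrank_map_eq_of_injOn _ _ (fun x _ h0 => by
      have := congrArg Prod.fst h0
      exact this)]
    exact hU
  have hEmbrank : ∀ W : Submodule F (Fin (Δ + k - d / 2) → F),
      finrank F ↥(Submodule.map ι W) = finrank F ↥W :=
    fun W => finrank_map_eq_of_injOn ι W
      (fun x _ h0 => hιinj (by rw [h0, map_zero]))
  have hEmbfst : ∀ (W : Submodule F (Fin (Δ + k - d / 2) → F)),
      ∀ z ∈ Submodule.map ι W, z.1 ∈ LinearMap.range j₂ := by
    intro W z hz
    rw [Submodule.mem_map] at hz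
    obtain ⟨x, _, rfl⟩ := hz
    exact ⟨(e₂ x).1, rfl⟩
  have hrangej₂ : finrank F ↥(LinearMap.range j₂) = k - d / 2 := by
    rw [LinearMap.finrank_range_of_inj hj₂, Module.finrank_fin_fun]
  have hΓfst' : ∀ U a z, z ∈ Γ U a → z.1 ∈ U := by
    intro U a z hz
    rw [← hΓfst U a]
    exact ⟨z, hz, rfl⟩
  have hΓsnd : ∀ U a z, z ∈ Γ U a → z.2 = ψ U a z.1 := by
    intro U a z hz
    rw [hΓ, Submodule.mem_map] at hz
    obtain ⟨x, hx, rfl⟩ := hz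
    rfl
  -- ψ determines the coefficient vector
  have hψeq : ∀ (U : Submodule F (Fin (n - Δ) → F)) a b, Module.finrank F ↥U = k →
      (∀ x ∈ U, ψ U a x = ψ U b x) → a = b := by
    intro U a b hU hab
    by_contra hne
    have hab0 : a - b ≠ 0 := sub_ne_zero.mpr hne
    have hker : Submodule.map (τ U) U ≤ LinearMap.ker (linzd F (a - b)) := by
      rintro y ⟨x, hx, rfl⟩
      rw [LinearMap.mem_ker]
      have h1 : gK.symm (linzd F a (τ U x)) = gK.symm (linzd F b (τ U x)) := by
        have := hab x hx
        simpa [hψ, LinearMap.comp_apply] using this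
      have h2 : linzd F a (τ U x) = linzd F b (τ U x) := gK.symm.injective h1
      have h3 : (linzd F a - linzd F b) (τ U x) = 0 := by
        rw [LinearMap.sub_apply, h2, sub_self]
      rwa [linzd_sub] at h3
    have hk1 : finrank F ↥(Submodule.map (τ U) U) = k := by
      rw [finrank_map_eq_of_injOn _ _ (hτ U hU), hU]
    have h5 := Submodule.finrank_mono hker
    rw [hk1] at h5
    have h4 := linzd_ker_finrank F (a - b) hab0
    omega
  -- injectivity of the lift
  have hLinj : ∀ U ∈ C₁, ∀ U' ∈ C₁, ∀ a a', Γ U a = Γ U' a' → U = U' ∧ a = a' := by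
    intro U hU U' hU' a a' hΓeq
    have hUU' : U = U' := by
      have := congrArg (Submodule.map (LinearMap.fst F _ _)) hΓeq
      rwa [hΓfst, hΓfst] at this
    subst hUU'
    refine ⟨rfl, hψeq U a a' (hC₁dim U hU) fun x hx => ?_⟩
    have hmem : ((LinearMap.prod LinearMap.id (ψ U a)) x : P) ∈ Γ U a' := by
      rw [← hΓeq]
      exact Submodule.mem_map_of_mem hx
    have h2 := hΓsnd U a' _ hmem
    exact h2
  -- intersection bounds
  have hbound1 : ∀ (U U' : Submodule F (Fin (n - Δ) → F)) a a',
      finrank F ↥(Γ U a ⊓ Γ U' a') ≤ finrank F ↥(U ⊓ U') := by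
    intro U U' a a'
    refine finrank_le_of_injOn (LinearMap.fst F _ _) _ _
      (fun z hz h0 => hΓzero U a z (Submodule.mem_inf.mp hz).1 h0) ?_
    rintro y ⟨z, hz, rfl⟩
    exact Submodule.mem_inf.mpr ⟨hΓfst' U a z (Submodule.mem_inf.mp hz).1,
      hΓfst' U' a' z (Submodule.mem_inf.mp hz).2⟩
  have hbound2 : ∀ U ∈ C₁, ∀ a a', a ≠ a' →
      finrank F ↥(Γ U a ⊓ Γ U a') ≤ k - d / 2 := by
    intro U hU a a' hne
    have hab0 : a - a' ≠ 0 := sub_ne_zero.mpr hne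
    have step1 : finrank F ↥(Γ U a ⊓ Γ U a') ≤
        finrank F ↥(U ⊓ LinearMap.ker ((linzd F (a - a')) ∘ₗ τ U)) := by
      refine finrank_le_of_injOn (LinearMap.fst F _ _) _ _
        (fun z hz h0 => hΓzero U a z (Submodule.mem_inf.mp hz).1 h0) ?_
      rintro y ⟨z, hz, rfl⟩
      obtain ⟨hz1, hz2⟩ := Submodule.mem_inf.mp hz
      have hx : z.1 ∈ U := hΓfst' U a z hz1
      refine Submodule.mem_inf.mpr ⟨hx, ?_⟩
      rw [LinearMap.mem_ker, LinearMap.comp_apply]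
      have e1 : z.2 = ψ U a z.1 := hΓsnd U a z hz1
      have e2 : z.2 = ψ U a' z.1 := hΓsnd U a' z hz2
      have h1 : gK.symm (linzd F a (τ U z.1)) = gK.symm (linzd F a' (τ U z.1)) := by
        have := e1.symm.trans e2
        simpa [hψ, LinearMap.comp_apply] using this
      have h2 : linzd F a (τ U z.1) = linzd F a' (τ U z.1) := gK.symm.injective h1
      have h3 : (linzd F a - linzd F a') (τ U z.1) = 0 := by
        rw [LinearMap.sub_apply, h2, sub_self]
      rwa [linzd_sub] at h3
    have step2 : finrank F ↥(U ⊓ LinearMap.ker ((linzd F (a - a')) ∘ₗ τ U)) ≤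
        finrank F ↥(LinearMap.ker (linzd F (a - a'))) := by
      refine finrank_le_of_injOn (τ U) _ _
        (fun x hx h0 => hτ U (hC₁dim U hU) x (Submodule.mem_inf.mp hx).1 h0) ?_
      rintro y ⟨x, hx, rfl⟩
      have := (Submodule.mem_inf.mp hx).2
      rwa [LinearMap.mem_ker, LinearMap.comp_apply] at this
    have h4 := linzd_ker_finrank F (a - a') hab0
    omega
  have hbound3 : ∀ (U : Submodule F (Fin (n - Δ) → F)) a
      (W : Submodule F (Fin (Δ + k - d / 2) → F)),
      finrank F ↥(Γ U a ⊓ Submodule.map ι W) ≤ k - d / 2 := by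
    intro U a W
    have h1 : finrank F ↥(Γ U a ⊓ Submodule.map ι W) ≤ finrank F ↥(LinearMap.range j₂) := by
      refine finrank_le_of_injOn (LinearMap.fst F _ _) _ _
        (fun z hz h0 => hΓzero U a z (Submodule.mem_inf.mp hz).1 h0) ?_
      rintro y ⟨z, hz, rfl⟩
      exact hEmbfst W z (Submodule.mem_inf.mp hz).2
    rwa [hrangej₂] at h1
  -- lifted subspaces are never embedded subspaces
  have hneq : ∀ U ∈ C₁, ∀ a, ∀ (W : Submodule F (Fin (Δ + k - d / 2) → F)),
      Γ U a ≠ Submodule.map ι W := by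
    intro U hU a W heq
    have hUle : U ≤ LinearMap.range j₂ := by
      intro x hx
      have hmem : ((LinearMap.prod LinearMap.id (ψ U a)) x : P) ∈ Γ U a :=
        Submodule.mem_map_of_mem hx
      rw [heq] at hmem
      have := hEmbfst W _ hmem
      exact this
    have h5 := Submodule.finrank_mono hUle
    rw [hC₁dim U hU, hrangej₂] at h5
    omega
  have hEmbinj : Function.Injective
      (Submodule.map ι : Submodule F (Fin (Δ + k - d / 2) → F) → Submodule F P) :=
    Submodule.map_injective_of_injective hιinj
  -- assemble the code
  refine ⟨(C₁ ×ˢ (Finset.univ : Finset (Fin (k - d / 2 + 1) → MyExt F Δ))).image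
      (fun p => Submodule.map E.toLinearMap (Γ p.1 p.2)) ∪
      C₂.image (fun W => Submodule.map E.toLinearMap (Submodule.map ι W)), ?_, ?_, ?_⟩
  · -- cardinality
    have hdisj : Disjoint
        ((C₁ ×ˢ (Finset.univ : Finset (Fin (k - d / 2 + 1) → MyExt F Δ))).image
          (fun p => Submodule.map E.toLinearMap (Γ p.1 p.2)))
        (C₂.image (fun W => Submodule.map E.toLinearMap (Submodule.map ι W))) := by
      rw [Finset.disjoint_left]
      intro X hX hX'
      rw [Finset.mem_image] at hX hX'
      obtain ⟨⟨U, a⟩, hp, hXe⟩ := hX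
      obtain ⟨W, hW, hXe'⟩ := hX'
      rw [Finset.mem_product] at hp
      exact hneq U hp.1 a W (hEinj (hXe.trans hXe'.symm))
    rw [Finset.card_union_of_disjoint hdisj]
    have hinj1 : Set.InjOn (fun p : Submodule F (Fin (n - Δ) → F) × (Fin (k - d / 2 + 1) → MyExt F Δ) => Submodule.map E.toLinearMap (Γ p.1 p.2))
        ↑(C₁ ×ˢ (Finset.univ : Finset (Fin (k - d / 2 + 1) → MyExt F Δ))) := by
      intro p hp p' hp' hpe
      simp only [Finset.coe_product, Set.mem_prod, Finset.mem_coe] at hp hp'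
      obtain ⟨h1, h2⟩ := hLinj p.1 hp.1 p'.1 hp'.1 p.2 p'.2 (hEinj hpe)
      exact Prod.ext h1 h2
    have hinj2 : Set.InjOn (fun W => Submodule.map E.toLinearMap (Submodule.map ι W)) ↑C₂ :=
      fun W _ W' _ h => hEmbinj (hEinj h)
    rw [Finset.card_image_of_injOn hinj1, Finset.card_image_of_injOn hinj2,
      Finset.card_product, Finset.card_univ, Fintype.card_fun, hKcard, Fintype.card_fin,
      hC₁card, hC₂card, ← pow_mul]
    ring
  · -- dimensions
    intro X hX
    rw [Finset.mem_union, Finset.mem_image, Finset.mem_image] at hX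
    rcases hX with ⟨⟨U, a⟩, hp, rfl⟩ | ⟨W, hW, rfl⟩ <;> (try dsimp only)
    · rw [Finset.mem_product] at hp
      rw [LinearEquiv.finrank_map_eq]
      exact hΓrank U a (hC₁dim U hp.1)
    · rw [LinearEquiv.finrank_map_eq, hEmbrank]
      exact hC₂dim W hW
  · -- distances
    intro X hX Y hY hXY
    rw [Finset.mem_union, Finset.mem_image, Finset.mem_image] at hX hY
    have hlift_emb : ∀ U ∈ C₁, ∀ (a : Fin (k - d / 2 + 1) → MyExt F Δ), ∀ W ∈ C₂,
        d ≤ subspaceDist F (Submodule.map E.toLinearMap (Γ U a))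
          (Submodule.map E.toLinearMap (Submodule.map ι W)) := by
      intro U hU a W hW
      rw [hEdist, hΓrank U a (hC₁dim U hU), hEmbrank, hC₂dim W hW]
      have := hbound3 U a W
      omega
    rcases hX with ⟨⟨U, a⟩, hp, rfl⟩ | ⟨W, hW, rfl⟩ <;>
      rcases hY with ⟨⟨U', a'⟩, hp', rfl⟩ | ⟨W', hW', rfl⟩ <;> (try dsimp only at hXY ⊢)
    · rw [Finset.mem_product] at hp hp'
      rw [hEdist, hΓrank U a (hC₁dim U hp.1), hΓrank U' a' (hC₁dim U' hp'.1)]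
      by_cases hUU : U = U'
      · subst hUU
        have haa : a ≠ a' := by
          intro h
          subst h
          exact hXY rfl
        have := hbound2 U hp.1 a a' haa
        omega
      · have hdist := hC₁dist U hp.1 U' hp'.1 hUU
        unfold subspaceDist at hdist
        rw [hC₁dim U hp.1, hC₁dim U' hp'.1] at hdist
        have := hbound1 U U' a a'
        omega
    · rw [Finset.mem_product] at hp
      exact hlift_emb U hp.1 a W' hW'
    · rw [Finset.mem_product] at hp'
      rw [subspaceDist_comm]
      exact hlift_emb U' hp'.1 a' W hW
    · have hWW : W ≠ W' := by
        intro h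
        subst h
        exact hXY rfl
      have hdist := hC₂dist W hW W' hW' hWW
      unfold subspaceDist at hdist
      rw [hEdist, ← Submodule.map_inf ι hιinj, hEmbrank, hEmbrank, hEmbrank]
      exact hdist
end
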